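/- arXiv:2212.09419 — 3 statements merged into one kernel-verified Lean document; each statement's English description precedes it below -/
import Mathlib

section
/- Let (D,f) be a filled diagram with columns D = [D^(1),…,D^(ℓ)], and let cycling(D,f) = (D′,f′), where D′ = [D^(2),…,D^(ℓ), D^(1)+1] (the leftmost column moved to the far right and shifted up by one row, D^(1)+1 := {a+1 : a ∈ D^(1)}) and f′ is the filling inherited from f under the natural bijection of cells. Then stat_{(D,f)}(w) = stat_{(D′,f′)}(w) for every w ∈ S_{|D|}, and consequently H_{(D,f)}[X;q,t] = H_{(D′,f′)}[X;q,t]. -/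
open scoped BigOperators Classical

noncomputable section

/-- The coefficient field `𝔽 = ℂ(q,t)`. -/
abbrev Fqt : Type := FractionRing (MvPolynomial (Fin 2) ℂ)

/-- The indeterminate `q` of `𝔽 = ℂ(q,t)`. -/
def qv : Fqt := algebraMap (MvPolynomial (Fin 2) ℂ) Fqt (MvPolynomial.X 0)

/-- The indeterminate `t` of `𝔽 = ℂ(q,t)`. -/
def tv : Fqt := algebraMap (MvPolynomial (Fin 2) ℂ) Fqt (MvPolynomial.X 1)

/-! ### Words and permutations (one-line notation, values `1,…,n`) -/

/-- `w_s`, the `s`-th letter of the word `w` (1-based indexing). -/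
def nthW (w : List ℕ) (s : ℕ) : ℕ := w.getD (s - 1) 0

/-- All permutations of `{1,…,n}` in one-line notation, as a list of words. -/
def PermWords (n : ℕ) : List (List ℕ) := (List.range' 1 n).permutations

/-- `w` is (the one-line notation of) a permutation of `{1,…,n}`. -/
def IsPermList (n : ℕ) (w : List ℕ) : Prop := w.Perm (List.range' 1 n)

/-- The inverse descent set `iDes(w) = Des(w⁻¹)`:
the set of `i` such that `i+1` appears to the left of `i` in `w`. -/
def iDes (w : List ℕ) : Finset ℕ :=
  (Finset.Icc 1 (w.length - 1)).filter fun i => w.idxOf (i + 1) < w.idxOf i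

/-- The modified inverse descent set `¯iDes(w)`. -/
def iDesBar (w : List ℕ) : Finset ℕ :=
  if nthW w w.length = nthW w (w.length - 1) - 1 then (iDes w).erase (nthW w w.length)
  else iDes w

/-- The descent set `Des(w) = {i : w_i > w_{i+1}}`. -/
def desSet (w : List ℕ) : Finset ℕ :=
  (Finset.Icc 1 (w.length - 1)).filter fun i => nthW w (i + 1) < nthW w i

/-- The standardization of a word. -/
def std (w : List ℕ) : List ℕ :=
  (List.range w.length).map fun s =>
    ((List.range w.length).filter fun t =>
      decide (w.getD t 0 < w.getD s 0 ∨ (w.getD t 0 = w.getD s 0 ∧ t ≤ s))).length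

/-- The subword `w_{[a,b]} = w_a w_{a+1} ⋯ w_b` (1-based). -/
def subw (w : List ℕ) (a b : ℕ) : List ℕ := (w.drop (a - 1)).take (b - a + 1)

/-- The restriction `w|_A` of a word to a set of (1-based) positions. -/
def wordAt (w : List ℕ) (A : Finset ℕ) : List ℕ := (A.sort (· ≤ ·)).map fun c => nthW w c

/-! ### Quasisymmetric and symmetric functions
    (formal power series in variables `x_0, x_1, x_2, …` over `𝔽`) -/

/-- The unique weakly increasing word whose content is the monomial `d`. -/
def sortedWord (d : ℕ →₀ ℕ) : List ℕ := (Finsupp.toMultiset d).sort (· ≤ ·)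

/-- Gessel's fundamental quasisymmetric function `F_{n,S}`. -/
def FQS (n : ℕ) (S : Finset ℕ) : MvPowerSeries ℕ Fqt := fun d =>
  if (sortedWord d).length = n ∧
      ∀ i ∈ S, (sortedWord d).getD (i - 1) 0 < (sortedWord d).getD i 0
  then 1 else 0

/-- Complete homogeneous symmetric function `h_d`. -/
def hSym (d : ℕ) : MvPowerSeries ℕ Fqt := FQS d ∅

/-- The decreasing list of the parts of a partition of `n`. -/
def partitionList {n : ℕ} (p : Nat.Partition n) : List ℕ := (p.parts.sort (· ≤ ·)).reverse

/-- Monomial symmetric function `m_ε` of a partition `ε ⊢ n`. -/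
def mSym {n : ℕ} (p : Nat.Partition n) : MvPowerSeries ℕ Fqt := fun d =>
  if Multiset.map (fun v => d v) d.support.val = p.parts then 1 else 0

/-- Cells of the Young diagram of a partition given by its list of row lengths
(French notation, rows indexed from the bottom). -/
def pCells (ρ : List ℕ) : Finset (ℕ × ℕ) :=
  (Finset.range ρ.length).biUnion fun i0 => (Finset.Icc 1 (ρ.getD i0 0)).image fun j => (i0 + 1, j)

/-- Semistandard Young tableaux of shape `ρ` (rows weakly increasing, columns strictly
increasing bottom-to-top) with content monomial `d`; the entry `v+1` corresponds to
the variable indexed by `v`. -/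
def SSYTset (ρ : List ℕ) (d : ℕ →₀ ℕ) : Set ((ℕ × ℕ) → ℕ) :=
  {T | (∀ u, u ∉ pCells ρ → T u = 0) ∧ (∀ u ∈ pCells ρ, 1 ≤ T u) ∧
    (∀ i j, (i, j) ∈ pCells ρ → (i, j + 1) ∈ pCells ρ → T (i, j) ≤ T (i, j + 1)) ∧
    (∀ i j, (i, j) ∈ pCells ρ → (i + 1, j) ∈ pCells ρ → T (i, j) < T (i + 1, j)) ∧
    (∀ v : ℕ, ((pCells ρ).filter fun u => T u = v + 1).card = d v)}

/-- The Schur function `s_ρ` for a partition given by its row lengths. -/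
def schurF (ρ : List ℕ) : MvPowerSeries ℕ Fqt := fun d => ((SSYTset ρ d).ncard : Fqt)

/-! ### Diagrams and filled diagrams -/

/-- A diagram whose columns are intervals: the `j`-th entry `(lo,hi)` means that
column `j` (1-based) occupies rows `lo, lo+1, …, hi`. -/
abbrev Diagram := List (ℕ × ℕ)

/-- The cells `(row, column)` of a diagram. -/
def dCells (D : Diagram) : Finset (ℕ × ℕ) :=
  (Finset.range D.length).biUnion fun j0 =>
    (Finset.Icc (D.getD j0 (1, 0)).1 (D.getD j0 (1, 0)).2).image fun i => (i, j0 + 1)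

/-- `|D|`, the number of cells. -/
def dSize (D : Diagram) : ℕ := (dCells D).card

/-- All rows are `≥ 1` and all columns are nonempty intervals. -/
def ValidDiagram (D : Diagram) : Prop := ∀ c ∈ D, 1 ≤ c.1 ∧ c.1 ≤ c.2

def maxRow (D : Diagram) : ℕ := (D.map Prod.snd).foldr max 0

/-- The cells of `D` listed in reading order: row by row, top row first,
left to right within each row. -/
def readingList (D : Diagram) : List (ℕ × ℕ) :=
  ((List.range (maxRow D)).reverse).flatMap fun i0 =>
    (List.range D.length).filterMap fun j0 =>
      if (D.getD j0 (1, 0)).1 ≤ i0 + 1 ∧ i0 + 1 ≤ (D.getD j0 (1, 0)).2 then some (i0 + 1, j0 + 1)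
      else none

/-- The entry `w_{N_D(u)}` of the word `w` at the cell `u` of `D`. -/
def dEntry (D : Diagram) (w : List ℕ) (u : ℕ × ℕ) : ℕ :=
  w.getD ((readingList D).idxOf u) 0

/-- The number of inversion pairs of cells of `D` with respect to `w`. -/
def invCount (D : Diagram) (w : List ℕ) : ℕ :=
  ((dCells D ×ˢ dCells D).filter fun p =>
    dEntry D w p.2 < dEntry D w p.1 ∧
      ((p.1.1 = p.2.1 ∧ p.1.2 < p.2.2) ∨ (p.1.1 = p.2.1 + 1 ∧ p.2.2 < p.1.2))).card

/-- The descent cells of `D` with respect to `w`. -/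
def descentCells (D : Diagram) (w : List ℕ) : Finset (ℕ × ℕ) :=
  (dCells D).filter fun u =>
    (u.1 - 1, u.2) ∈ dCells D ∧ dEntry D w (u.1 - 1, u.2) < dEntry D w u

/-- The non-bottom cells of `D`. -/
def nonBottom (D : Diagram) : Finset (ℕ × ℕ) :=
  (dCells D).filter fun u => (u.1 - 1, u.2) ∈ dCells D

/-- `stat_{(D,f)}(w) = inv_D(w) ⋅ maj_{(D,f)}(w)`. -/
def statD (D : Diagram) (f : ℕ × ℕ → Fqt) (w : List ℕ) : Fqt :=
  qv ^ invCount D w * ∏ u ∈ descentCells D w, f u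

/-- The generalized modified Macdonald polynomial `H_{(D,f)}[X;q,t]`. -/
def genH (D : Diagram) (f : ℕ × ℕ → Fqt) : MvPowerSeries ℕ Fqt :=
  ((PermWords (dSize D)).map fun w => statD D f w • FQS (dSize D) (iDes w)).sum

/-- The subword of `w` on the positions `{N_D(u) : u ∈ E}` where
`E = {u ∈ D : P u}`, i.e. `w ↓^D_E`. -/
def wRestrict (D : Diagram) (P : ℕ × ℕ → Bool) (w : List ℕ) : List ℕ :=
  ((readingList D).zip w).filterMap fun p => if P p.1 then some p.2 else none

/-! ### Partitions, standard fillings, (modified) Macdonald polynomials -/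

/-- A partition presented by its (weakly decreasing, positive) column lengths. -/
def IsPartitionCols (a : List ℕ) : Prop := a.Pairwise (· ≥ ·) ∧ ∀ x ∈ a, 1 ≤ x

/-- The Young diagram of a partition given by its column lengths. -/
def colDiagram (a : List ℕ) : Diagram := a.map fun h => (1, h)

/-- The standard filling `f^st_μ(u) = q^{-arm(u)} t^{leg(u)+1}` of the partition with
column lengths `a`. -/
def fstFill (a : List ℕ) : ℕ × ℕ → Fqt := fun u =>
  qv ^ (-((((Finset.range a.length).filter fun j0 => u.2 ≤ j0 ∧ u.1 ≤ a.getD j0 0).card : ℤ))) *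
    tv ^ (a.getD (u.2 - 1) 0 - u.1 + 1)

/-- `T_μ = ∏_{(i,j) ∈ μ} t^{i-1} q^{j-1}`. -/
def Tstat (a : List ℕ) : Fqt :=
  ∏ u ∈ dCells (colDiagram a), (tv ^ (u.1 - 1) * qv ^ (u.2 - 1))

/-- The modified Macdonald polynomial `H_μ[X;q,t]` of the partition with column lengths `a`. -/
def Hmac (a : List ℕ) : MvPowerSeries ℕ Fqt := genH (colDiagram a) (fstFill a)

/-- The Macdonald intersection polynomial
`I_{λ,μ}[X;q,t] = (T_λ H_μ - T_μ H_λ)/(T_λ - T_μ)` (partitions by column lengths). -/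
def Imac (lam mu : List ℕ) : MvPowerSeries ℕ Fqt :=
  (Tstat lam - Tstat mu)⁻¹ • (Tstat lam • Hmac mu - Tstat mu • Hmac lam)

/-! ### Butler permutations -/

/-- The number of arcs of the matching `M(w)` for `w ∈ S_n`. -/
def numArcs (n : ℕ) : ℕ := if n % 2 = 0 then n / 2 + 1 else (n + 1) / 2

/-- The directed arc `α_k(w)` of the matching `M(w)`. -/
def arcW (w : List ℕ) (k : ℕ) : ℕ × ℕ :=
  let n := w.length
  if n % 2 = 0 then
    if k = 1 then (nthW w n, n + 1)
    else if k ≤ n / 2 then (nthW w (n - 2 * (k - 1)), nthW w (n - 2 * (k - 1) + 1))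
    else (0, nthW w 1)
  else
    if k ≤ (n - 1) / 2 then (nthW w (n - 2 * (k - 1) - 1), nthW w (n - 2 * (k - 1)))
    else (0, nthW w 1)

/-- The arc is in the forward direction. -/
def forwardArc (A : ℕ × ℕ) : Bool := decide (A.1 < A.2)

/-- The arc is in the reverse direction. -/
def reverseArc (A : ℕ × ℕ) : Bool := decide (A.2 < A.1)

/-- The two arcs cross. -/
def crossArc (A B : ℕ × ℕ) : Bool :=
  decide ((min A.1 A.2 < min B.1 B.2 ∧ min B.1 B.2 < max A.1 A.2 ∧ max A.1 A.2 < max B.1 B.2) ∨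
    (min B.1 B.2 < min A.1 A.2 ∧ min A.1 A.2 < max B.1 B.2 ∧ max B.1 B.2 < max A.1 A.2))

/-- The arc `A` is nested by the arc `B`. -/
def nestedArc (A B : ℕ × ℕ) : Bool :=
  decide (min B.1 B.2 < min A.1 A.2 ∧ max A.1 A.2 < max B.1 B.2)

/-- `w` is a Butler permutation, i.e. `w ∈ 𝔅_n`. -/
def isButlerB (w : List ℕ) : Bool :=
  let K := numArcs w.length
  let s := (Finset.Icc 1 (K - 1)).filter fun k => crossArc (arcW w k) (arcW w (k + 1)) = false
  if h : s.Nonempty then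
    let k := s.min' h
    (nestedArc (arcW w (k + 1)) (arcW w k) && reverseArc (arcW w k)) ||
      (!nestedArc (arcW w (k + 1)) (arcW w k) && forwardArc (arcW w k))
  else reverseArc (arcW w (K - 1))

/-! ### The column exchange operators `S_j`, `S̄_j`, and cycling -/

/-- The restriction of `(D,f)` to columns `c, c+1` lies in `𝒱(n,m)`. -/
def memVAt (D : Diagram) (f : ℕ × ℕ → Fqt) (c n m : ℕ) : Prop :=
  1 ≤ m ∧ m < n ∧ D.getD (c - 1) (1, 0) = (1, n) ∧ D.getD c (1, 0) = (1, m) ∧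
    ∀ i, 1 < i → i ≤ m → f (i, c) = qv⁻¹ * f (m + 1, c) * f (i, c + 1)

/-- Exchange columns `j` and `j+1` (1-based) of a diagram. -/
def swapCols (j : ℕ) (D : Diagram) : Diagram :=
  (D.set (j - 1) (D.getD j (1, 0))).set j (D.getD (j - 1) (1, 0))

/-- The filling of `S_j(D,f)`, where `m` is the length of column `j+1` of `D`. -/
def SjFill (j m : ℕ) (f : ℕ × ℕ → Fqt) : ℕ × ℕ → Fqt := fun u =>
  if u.2 = j then f (u.1, j + 1)
  else if u.2 = j + 1 then (if u.1 = m + 1 then qv⁻¹ * f (m + 1, j) else f (u.1, j))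
  else f u

/-- The column exchange operator `S_j` on filled diagrams. -/
def SjOp (j : ℕ) (Df : Diagram × (ℕ × ℕ → Fqt)) : Diagram × (ℕ × ℕ → Fqt) :=
  (swapCols j Df.1, SjFill j (Df.1.getD j (1, 0)).2 Df.2)

/-- The restriction of `(D,f)` to columns `c, c+1` lies in `𝒱̄(n,m;α)`. -/
def memVbarAt (D : Diagram) (f : ℕ × ℕ → Fqt) (c n m : ℕ) (α : Fqt) : Prop :=
  1 ≤ m ∧ m < n ∧ D.getD (c - 1) (1, 0) = (1, n) ∧ D.getD c (1, 0) = (2, m) ∧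
    qv⁻¹ * f (m + 1, c) = α ∧ ∀ i, 2 < i → i ≤ m → f (i, c) = α * f (i, c + 1)

/-- The filling of `S̄_j(D,f)`, where `m` is the length of column `j+1` of `D`. -/
def SbarFillAt (j m : ℕ) (α : Fqt) (f : ℕ × ℕ → Fqt) : ℕ × ℕ → Fqt := fun u =>
  if u.2 = j then (if u.1 = 2 then α⁻¹ * f (2, j) else f (u.1, j + 1))
  else if u.2 = j + 1 then (if u.1 = m + 1 then α else f (u.1, j))
  else f u

/-- Shapes for `S̄_j`: columns `(1,n), (2,m)` become `(1,m), (2,n)`. -/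
def sbarCols (j : ℕ) (D : Diagram) : Diagram :=
  (D.set (j - 1) (1, (D.getD j (1, 0)).2)).set j (2, (D.getD (j - 1) (1, 0)).2)

/-- The operator `S̄_j` on filled diagrams. -/
def SbarOp (j : ℕ) (α : Fqt) (Df : Diagram × (ℕ × ℕ → Fqt)) : Diagram × (ℕ × ℕ → Fqt) :=
  (sbarCols j Df.1, SbarFillAt j (Df.1.getD j (1, 0)).2 α Df.2)

/-- The cycling operator on diagrams: the leftmost column is moved to the far right
and shifted up by one row. -/
def cycD (D : Diagram) : Diagram :=
  D.tail ++ [((D.headD (1, 0)).1 + 1, (D.headD (1, 0)).2 + 1)]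

/-- The filling inherited under cycling. -/
def cycFill (D : Diagram) (f : ℕ × ℕ → Fqt) : ℕ × ℕ → Fqt := fun u =>
  if u.2 = D.length then f (u.1 - 1, 1) else f (u.1, u.2 + 1)

/-- The cycling operator on filled diagrams. -/
def cycOp (Df : Diagram × (ℕ × ℕ → Fqt)) : Diagram × (ℕ × ℕ → Fqt) :=
  (cycD Df.1, cycFill Df.1 Df.2)

/-! ### The deformation `𝔇_{λ,μ}` and Butler permutations of type `(λ,μ)` -/

/-- Apply a sequence of column exchange operators, leftmost entry first. -/
def applyS (ks : List ℕ) (Df : Diagram × (ℕ × ℕ → Fqt)) : Diagram × (ℕ × ℕ → Fqt) :=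
  ks.foldl (fun acc k => SjOp k acc) Df

/-- `𝔇_{λ,μ}(μ, f^st_μ)`: here `ν` has column lengths `a`, `λ = ν` minus the top cell of
column `i`, `μ = ν` minus the top cell of column `j` (`i < j`).  The `j`-th column is moved
to the far left, the original `i`-th column to the far right, and then cycling is applied. -/
def deformMu (a : List ℕ) (i j : ℕ) : Diagram × (ℕ × ℕ → Fqt) :=
  let mu := a.set (j - 1) (a.getD (j - 1) 0 - 1)
  cycOp (applyS ((List.range' 1 (j - 1)).reverse ++ List.range' (i + 1) (a.length - 1 - i))
    (colDiagram mu, fstFill mu))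

/-- `𝔇_{λ,μ}(λ, f^st_λ)`: the `j`-th column is moved to the far right, the `i`-th column
to the far left, and then cycling is applied. -/
def deformLa (a : List ℕ) (i j : ℕ) : Diagram × (ℕ × ℕ → Fqt) :=
  let lam := a.set (i - 1) (a.getD (i - 1) 0 - 1)
  cycOp (applyS (List.range' j (a.length - j) ++ (List.range' 1 (i - 1)).reverse)
    (colDiagram lam, fstFill lam))

/-- The subword of `w` governing membership in `𝔅_{λ,μ}`: restrict to the last two
columns of `D_μ` and take positions `a_i - a_j, …, a_i + a_j - 1`. -/
def butlerWordLM (a : List ℕ) (i j : ℕ) (w : List ℕ) : List ℕ :=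
  subw (wRestrict (deformMu a i j).1
      (fun u => decide (u.2 = a.length - 1 ∨ u.2 = a.length)) w)
    (a.getD (i - 1) 0 - a.getD (j - 1) 0) (a.getD (i - 1) 0 + a.getD (j - 1) 0 - 1)

/-- Membership in the set `𝔅_{λ,μ}` of Butler permutations of type `(λ,μ)`. -/
def memButlerLM (a : List ℕ) (i j : ℕ) (w : List ℕ) : Prop :=
  isButlerB (std (butlerWordLM a i j w)) = true

/-- The statistic `stat_{λ,μ}`. -/
def statLM (a : List ℕ) (i j : ℕ) (w : List ℕ) : Fqt :=
  statD (deformMu a i j).1 (deformMu a i j).2 w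

/-! ### LLT polynomials -/

/-- A skew partition, given by the row lengths of the outer and inner shapes. -/
abbrev SkewShape := (List ℕ) × (List ℕ)

/-- The cells of a skew shape. -/
def skCells (s : SkewShape) : List (ℕ × ℕ) :=
  (List.range s.1.length).flatMap fun i0 =>
    (List.range' (s.2.getD i0 0 + 1) (s.1.getD i0 0 - s.2.getD i0 0)).map fun j => (i0 + 1, j)

/-- The cells of a tuple of skew shapes, tagged by the component index (0-based). -/
def tCells (ν : List SkewShape) : List (ℕ × ℕ × ℕ) :=
  (List.range ν.length).flatMap fun k =>
    (skCells (ν.getD k ([], []))).map fun c => (k, c.1, c.2)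

/-- The content `c(u) = i - j` of a cell of a tuple of skew shapes. -/
def contentOf (u : ℕ × ℕ × ℕ) : ℤ := (u.2.1 : ℤ) - (u.2.2 : ℤ)

/-- Reading order comparison: increasing content, ties broken left to right. -/
def lltLe (u v : ℕ × ℕ × ℕ) : Bool :=
  decide (contentOf u < contentOf v ∨
    (contentOf u = contentOf v ∧ (u.1 < v.1 ∨ (u.1 = v.1 ∧ u.2.2 ≤ v.2.2))))

/-- The cells of a tuple of skew shapes in reading order. -/
def lltReading (ν : List SkewShape) : List (ℕ × ℕ × ℕ) := (tCells ν).mergeSort lltLe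

def lltSize (ν : List SkewShape) : ℕ := (tCells ν).length

/-- The entry at the cell `u` of the tableau whose reading word is `w`. -/
def lltEntry (ν : List SkewShape) (w : List ℕ) (u : ℕ × ℕ × ℕ) : ℕ :=
  w.getD ((lltReading ν).idxOf u) 0

/-- `w` is the reading word of a standard Young tableau of shape `ν`. -/
def lltStandard (ν : List SkewShape) (w : List ℕ) : Prop :=
  ∀ u ∈ tCells ν,
    ((u.1, u.2.1, u.2.2 + 1) ∈ tCells ν →
      lltEntry ν w u < lltEntry ν w (u.1, u.2.1, u.2.2 + 1)) ∧
    ((u.1, u.2.1 + 1, u.2.2) ∈ tCells ν →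
      lltEntry ν w u < lltEntry ν w (u.1, u.2.1 + 1, u.2.2))

/-- The number of inversions of the standard tableau with reading word `w`. -/
def lltInv (ν : List SkewShape) (w : List ℕ) : ℕ :=
  ((tCells ν).product (tCells ν)).countP fun p =>
    decide (lltEntry ν w p.2 < lltEntry ν w p.1 ∧
      ((p.1.1 < p.2.1 ∧ contentOf p.1 = contentOf p.2) ∨
        (p.2.1 < p.1.1 ∧ contentOf p.1 = contentOf p.2 + 1)))

/-- The LLT polynomial of a tuple of skew shapes. -/
def LLTpoly (ν : List SkewShape) : MvPowerSeries ℕ Fqt :=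
  (((PermWords (lltSize ν)).filter fun w => decide (lltStandard ν w)).map fun w =>
    (qv ^ lltInv ν w) • FQS (lltSize ν) (iDes w)).sum

/-! ### Ribbons -/

/-- Number of up-steps among the first `p` steps of the ribbon with content
interval `[r, r+s]` and descent set `S`. -/
def ribbonUp (r : ℕ) (S : Finset ℕ) (p : ℕ) : ℕ :=
  ((Finset.Icc (r + 1) (r + p)).filter fun x => x ∈ S).card

/-- The cells of the ribbon `R_{[r,r+s]}(S)`; the cell of content `r + p`. -/
def ribbonCellList (r s : ℕ) (S : Finset ℕ) : List (ℕ × ℕ) :=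
  (List.range (s + 1)).map fun p =>
    (r + s + 1 + ribbonUp r S p, s + 1 - (p - ribbonUp r S p))

/-- The ribbon `R_{[r,r+s]}(S)`: the unique ribbon (as a skew shape) whose cells have
content set `{r, …, r+s}` and whose descent set is `S`. -/
def ribbonR (r s : ℕ) (S : Finset ℕ) : SkewShape :=
  (((List.range (r + s + 1 + ribbonUp r S s)).map fun i0 =>
      (if ((ribbonCellList r s S).filterMap fun u =>
            if u.1 = i0 + 1 then some u.2 else none) = []
        then s + 1
        else ((ribbonCellList r s S).filterMap fun u =>
            if u.1 = i0 + 1 then some u.2 else none).foldr max 0)),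
    ((List.range (r + s + 1 + ribbonUp r S s)).map fun i0 =>
      (if ((ribbonCellList r s S).filterMap fun u =>
            if u.1 = i0 + 1 then some u.2 else none) = []
        then s + 1
        else (((ribbonCellList r s S).filterMap fun u =>
            if u.1 = i0 + 1 then some u.2 else none).foldr min (s + 1)) - 1)))

/-- A single cell of content `a`, as a skew shape. -/
def cellC (a : ℕ) : SkewShape := ribbonR a 0 ∅

/-! ### Laurent polynomials in `q, t` -/

/-- Evaluation of a formal (integer) Laurent polynomial in `q, t`, presented as a list of
terms `(coefficient, q-exponent, t-exponent)`. -/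
def evalLaurent (L : List (ℤ × ℤ × ℤ)) : Fqt :=
  (L.map fun x => (x.1 : Fqt) * qv ^ x.2.1 * tv ^ x.2.2).sum

/-- `c` is a Laurent polynomial in `q` and `t` with nonnegative integer coefficients. -/
def IsNonnegLaurent (c : Fqt) : Prop :=
  ∃ L : List (ℕ × ℤ × ℤ), c = (L.map fun x => (x.1 : Fqt) * qv ^ x.2.1 * tv ^ x.2.2).sum

/-- `c` is a Laurent monomial `q^a t^b`. -/
def IsLaurentMonomial (c : Fqt) : Prop := ∃ e1 e2 : ℤ, c = qv ^ e1 * tv ^ e2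

/-! ### Statistics on words, the operators `γ_x` and `𝒜_k`, super-standard words -/

/-- The major index of a word. -/
def majW (u : List ℕ) : ℕ :=
  ((Finset.Icc 1 (u.length - 1)).filter fun i => nthW u (i + 1) < nthW u i).sum id

/-- The inversion number of a word. -/
def invW (u : List ℕ) : ℕ :=
  (((Finset.Icc 1 u.length) ×ˢ (Finset.Icc 1 u.length)).filter fun p =>
    p.1 < p.2 ∧ nthW u p.2 < nthW u p.1).card

/-- Helper for `γ_x`: `brk` tests whether a letter begins a new block. -/
def gammaGo (brk : ℕ → Bool) : ℕ → List ℕ → List ℕ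
  | h, [] => [h]
  | h, y :: ys => if brk y then h :: gammaGo brk y ys else y :: gammaGo brk h ys

/-- The operator `γ_x`: cut `u` into blocks before each letter smaller (resp. larger) than
`x` according to whether `u_1 < x` (resp. `u_1 > x`), and move the first letter of each
block to the end of the block. -/
def gammaX (x : ℕ) (u : List ℕ) : List ℕ :=
  match u with
  | [] => []
  | h :: rest =>
    gammaGo (fun y => if h < x then decide (y < x) else decide (x < y)) h rest

/-- Assaf's operator `𝒜_k`. -/
def Aop (k : ℕ) (w : List ℕ) : List ℕ := w.take k ++ gammaX (nthW w k) (w.drop k)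

/-- The de-standardization of a permutation. -/
def dst (w : List ℕ) : List ℕ :=
  w.map fun v => 1 + ((iDes w).filter fun i => i < v).card

/-- A word is Yamanouchi. -/
def Yamanouchi (u : List ℕ) : Prop :=
  ∀ p i, 2 ≤ i → (u.drop p).count i ≤ (u.drop p).count (i - 1)

/-- `w` is a super-standard permutation of weight `lam` (given by its list of parts). -/
def IsSSS (lam : List ℕ) (w : List ℕ) : Prop :=
  Yamanouchi (dst w) ∧ ∀ s, 1 ≤ s → (dst w).count s = lam.getD (s - 1) 0

/-- The column lengths of the hook `(n-k, 1^k)`. -/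
def hookCols (n k : ℕ) : List ℕ := (k + 1) :: List.replicate (n - k - 1) 1

namespace CyclingAux

/-- Row `i0+1` of a diagram, in reading order. -/
def rowL (E : Diagram) (i0 : ℕ) : List (ℕ × ℕ) :=
  (List.range E.length).filterMap fun j0 =>
    if (E.getD j0 (1, 0)).1 ≤ i0 + 1 ∧ i0 + 1 ≤ (E.getD j0 (1, 0)).2 then some (i0 + 1, j0 + 1)
    else none

/-- Reading list restricted to rows `R, R-1, …, 1`. -/
def RL (E : Diagram) (R : ℕ) : List (ℕ × ℕ) :=
  ((List.range R).reverse).flatMap (rowL E)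

lemma readingList_eq_RL (E : Diagram) : readingList E = RL E (maxRow E) := rfl

lemma RL_succ (E : Diagram) (R : ℕ) : RL E (R + 1) = rowL E R ++ RL E R := by
  simp [RL, List.range_succ]

lemma le_foldr_max (l : List ℕ) : ∀ x ∈ l, x ≤ l.foldr max 0 := by
  induction l with
  | nil => simp
  | cons a l ih =>
    intro x hx
    rcases List.mem_cons.mp hx with h | h
    · simp [h, le_max_iff]
    · exact le_trans (ih x h) (by simp [le_max_iff])

lemma snd_le_maxRow (E : Diagram) (j0 : ℕ) (h : j0 < E.length) :
    (E.getD j0 (1, 0)).2 ≤ maxRow E := by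
  apply le_foldr_max
  rw [List.getD_eq_getElem E (1,0) h]
  exact List.mem_map.mpr ⟨E[j0], List.getElem_mem _, rfl⟩

lemma rowL_eq_nil (E : Diagram) (i0 : ℕ) (h : maxRow E ≤ i0) : rowL E i0 = [] := by
  rw [rowL, List.filterMap_eq_nil_iff]
  intro j0 hj0
  rw [if_neg]
  rintro ⟨-, h2⟩
  exact absurd (le_trans h2 (snd_le_maxRow E j0 (List.mem_range.mp hj0))) (by omega)

lemma RL_add (E : Diagram) (k : ℕ) : RL E (maxRow E + k) = RL E (maxRow E) := by
  induction k with
  | zero => rfl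
  | succ k ih =>
    rw [show maxRow E + (k+1) = (maxRow E + k) + 1 by ring, RL_succ,
      rowL_eq_nil E _ (by omega), List.nil_append, ih]

lemma RL_eq_readingList (E : Diagram) (M : ℕ) (h : maxRow E ≤ M) :
    RL E M = readingList E := by
  obtain ⟨k, rfl⟩ := Nat.exists_eq_add_of_le h
  rw [RL_add, readingList_eq_RL]

lemma mem_rowL (E : Diagram) (i0 : ℕ) (u : ℕ × ℕ) (h : u ∈ rowL E i0) :
    u.1 = i0 + 1 ∧ 1 ≤ u.2 ∧ u.2 ≤ E.length := by
  rw [rowL, List.mem_filterMap] at h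
  obtain ⟨j0, hj0, hu⟩ := h
  split at hu
  · cases hu; simpa using List.mem_range.mp hj0
  · cases hu

lemma mem_RL (E : Diagram) (R : ℕ) (u : ℕ × ℕ) (h : u ∈ RL E R) :
    1 ≤ u.2 ∧ u.2 ≤ E.length := by
  rw [RL, List.mem_flatMap] at h
  obtain ⟨i0, -, hu⟩ := h
  exact (mem_rowL E i0 u hu).2

/-- The bijection on cells induced by cycling, `m = ` number of tail columns. -/
def phi (m : ℕ) (u : ℕ × ℕ) : ℕ × ℕ :=
  if u.2 = 1 then (u.1 + 1, m + 1) else (u.1, u.2 - 1)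

lemma phi_inj (m : ℕ) (u v : ℕ × ℕ) (hu : 1 ≤ u.2 ∧ u.2 ≤ m + 1)
    (hv : 1 ≤ v.2 ∧ v.2 ≤ m + 1) (h : phi m u = phi m v) : u = v := by
  rcases u with ⟨a, b⟩; rcases v with ⟨c, d⟩
  simp only [phi] at h
  simp only at hu hv
  split_ifs at h <;> rw [Prod.mk.injEq] at h <;> rw [Prod.mk.injEq] <;> omega

lemma phi_eval_one (m a : ℕ) : phi m (a, 1) = (a + 1, m + 1) := rfl

lemma phi_eval_ne (m a b : ℕ) (h : b ≠ 1) : phi m (a, b) = (a, b - 1) := if_neg h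

section Cyc

variable (lo hi : ℕ) (T : List (ℕ × ℕ))

lemma rowL_cons (i0 : ℕ) :
    rowL ((lo, hi) :: T) i0 =
      (if lo ≤ i0 + 1 ∧ i0 + 1 ≤ hi then [(i0 + 1, 1)] else []) ++
        (rowL T i0).map (fun u => (u.1, u.2 + 1)) := by
  have htail : List.filterMap
      ((fun j0 => if (((lo,hi)::T).getD j0 (1,0)).1 ≤ i0 + 1 ∧
          i0 + 1 ≤ (((lo,hi)::T).getD j0 (1,0)).2 then some (i0+1, j0+1) else none) ∘ Nat.succ)
      (List.range T.length) = (rowL T i0).map (fun u => (u.1, u.2 + 1)) := by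
    rw [rowL, List.map_filterMap]
    apply List.filterMap_congr
    intro j0 _
    simp only [Function.comp, List.getD_cons_succ]
    split <;> rfl
  rw [rowL, show ((lo,hi)::T).length = T.length + 1 from rfl, List.range_succ_eq_map]
  by_cases hc : lo ≤ i0 + 1 ∧ i0 + 1 ≤ hi
  · rw [List.filterMap_cons_some (by simp only [List.getD_cons_zero]; rw [if_pos hc]),
      List.filterMap_map, htail, if_pos hc]
    rfl
  · rw [List.filterMap_cons_none (by simp only [List.getD_cons_zero]; rw [if_neg hc]),
      List.filterMap_map, htail, if_neg hc, List.nil_append]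

lemma rowL_append (i0 : ℕ) :
    rowL (T ++ [(lo + 1, hi + 1)]) i0 =
      rowL T i0 ++ (if lo + 1 ≤ i0 + 1 ∧ i0 + 1 ≤ hi + 1 then [(i0 + 1, T.length + 1)] else []) := by
  rw [rowL, show (T ++ [(lo+1,hi+1)]).length = T.length + 1 by simp, List.range_succ,
    List.filterMap_append]
  congr 1
  · rw [rowL]
    apply List.filterMap_congr
    intro j0 hj0
    rw [List.getD_append _ _ _ _ (List.mem_range.mp hj0)]
  · have h2 : (T ++ [(lo+1,hi+1)]).getD T.length (1,0) = (lo+1, hi+1) := by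
      rw [List.getD_eq_getElem _ _ (by simp)]
      simp
    simp only [List.filterMap_cons, List.filterMap_nil, h2]
    by_cases h : lo + 1 ≤ i0 + 1 ∧ i0 + 1 ≤ hi + 1
    · rw [if_pos h, if_pos h]
    · rw [if_neg h, if_neg h]

lemma map_phi_rowL_cons (i0 : ℕ) :
    (rowL ((lo, hi) :: T) i0).map (phi T.length) =
      (if lo + 1 ≤ i0 + 2 ∧ i0 + 2 ≤ hi + 1 then [(i0 + 2, T.length + 1)] else []) ++
        rowL T i0 := by
  rw [rowL_cons, List.map_append, List.map_map]
  congr 1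
  · have : (lo ≤ i0 + 1 ∧ i0 + 1 ≤ hi) ↔ (lo + 1 ≤ i0 + 2 ∧ i0 + 2 ≤ hi + 1) := by omega
    split <;> split <;> simp_all [phi]
  · rw [show (rowL T i0) = List.map id (rowL T i0) by simp]
    rw [List.map_map]
    apply List.map_congr_left
    intro u hu
    have := mem_rowL T i0 u hu
    simp [phi, Function.comp, Prod.ext_iff]
    omega

lemma RL_cyc (hlo : 1 ≤ lo) (R : ℕ) :
    RL (T ++ [(lo + 1, hi + 1)]) (R + 1) =
      rowL T R ++ (RL ((lo, hi) :: T) R).map (phi T.length) := by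
  induction R with
  | zero =>
    rw [RL_succ, show RL (T ++ [(lo+1,hi+1)]) 0 = [] from rfl,
      show RL ((lo,hi)::T) 0 = [] from rfl, rowL_append]
    rw [if_neg (by omega)]
    simp
  | succ R ih =>
    rw [RL_succ, ih, rowL_append, RL_succ, List.map_append, map_phi_rowL_cons]
    simp only [List.append_assoc]

lemma readingList_cyc (hlo : 1 ≤ lo) :
    readingList (T ++ [(lo + 1, hi + 1)]) =
      (readingList ((lo, hi) :: T)).map (phi T.length) := by
  set M := max (maxRow ((lo,hi)::T)) (maxRow (T ++ [(lo+1,hi+1)])) with hM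
  have h1 : maxRow (T ++ [(lo+1,hi+1)]) ≤ M + 1 := by omega
  have h2 : maxRow ((lo,hi)::T) ≤ M := le_max_left _ _
  have h3 : maxRow T ≤ M := by
    have : maxRow ((lo,hi)::T) = max hi (maxRow T) := rfl
    omega
  rw [← RL_eq_readingList _ (M+1) h1, ← RL_eq_readingList _ M h2, RL_cyc lo hi T hlo M,
    rowL_eq_nil T M h3, List.nil_append]

end Cyc

lemma indexOf_map_phi (m : ℕ) (l : List (ℕ × ℕ)) (hl : ∀ x ∈ l, 1 ≤ x.2 ∧ x.2 ≤ m + 1)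
    (u : ℕ × ℕ) (hu : 1 ≤ u.2 ∧ u.2 ≤ m + 1) :
    (l.map (phi m)).idxOf (phi m u) = l.idxOf u := by
  induction l with
  | nil => simp
  | cons a l ih =>
    by_cases h : a = u
    · subst h
      simp [List.idxOf_cons]
    · have ha := hl a (by simp)
      have hne : phi m a ≠ phi m u := fun hc => h (phi_inj m a u ha hu hc)
      rw [List.map_cons]
      simp only [List.idxOf_cons, beq_false_of_ne hne, beq_false_of_ne h, cond_false]
      rw [ih (fun x hx => hl x (by simp [hx]))]

lemma mem_dCells (E : Diagram) (u : ℕ × ℕ) :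
    u ∈ dCells E ↔ ∃ j0 < E.length,
      (E.getD j0 (1, 0)).1 ≤ u.1 ∧ u.1 ≤ (E.getD j0 (1, 0)).2 ∧ u.2 = j0 + 1 := by
  simp only [dCells, Finset.mem_biUnion, Finset.mem_range, Finset.mem_image, Finset.mem_Icc]
  constructor
  · rintro ⟨j0, hj0, i, ⟨h1, h2⟩, rfl⟩
    exact ⟨j0, hj0, h1, h2, rfl⟩
  · rintro ⟨j0, hj0, h1, h2, h3⟩
    exact ⟨j0, hj0, u.1, ⟨h1, h2⟩, by rw [← h3]⟩

lemma dCells_col_bounds (E : Diagram) (u : ℕ × ℕ) (h : u ∈ dCells E) :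
    1 ≤ u.2 ∧ u.2 ≤ E.length := by
  obtain ⟨j0, hj0, -, -, h3⟩ := (mem_dCells E u).mp h
  omega

lemma dCells_row_pos (E : Diagram) (hE : ValidDiagram E) (u : ℕ × ℕ) (h : u ∈ dCells E) :
    1 ≤ u.1 := by
  obtain ⟨j0, hj0, h1, -, -⟩ := (mem_dCells E u).mp h
  have : E.getD j0 (1,0) ∈ E := by
    rw [List.getD_eq_getElem E (1,0) hj0]; exact List.getElem_mem _
  exact le_trans (hE _ this).1 h1

section Cyc2

variable (lo hi : ℕ) (T : List (ℕ × ℕ))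

lemma mem_readingList_bounds (E : Diagram) (u : ℕ × ℕ) (h : u ∈ readingList E) :
    1 ≤ u.2 ∧ u.2 ≤ E.length :=
  mem_RL E _ u (by rwa [readingList_eq_RL] at h)

lemma dEntry_cyc (hlo : 1 ≤ lo) (w : List ℕ) (u : ℕ × ℕ)
    (hu : 1 ≤ u.2 ∧ u.2 ≤ T.length + 1) :
    dEntry (T ++ [(lo + 1, hi + 1)]) w (phi T.length u) = dEntry ((lo, hi) :: T) w u := by
  unfold dEntry
  rw [readingList_cyc lo hi T hlo,
    indexOf_map_phi T.length _
      (fun x hx => by simpa using mem_readingList_bounds _ x hx) u hu]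

lemma mem_dCells_cons (u : ℕ × ℕ) :
    u ∈ dCells ((lo, hi) :: T) ↔
      ((lo ≤ u.1 ∧ u.1 ≤ hi ∧ u.2 = 1) ∨
        ∃ j0 < T.length, (T.getD j0 (1, 0)).1 ≤ u.1 ∧ u.1 ≤ (T.getD j0 (1, 0)).2 ∧
          u.2 = j0 + 2) := by
  rw [mem_dCells]
  constructor
  · rintro ⟨j0, hj0, h1, h2, h3⟩
    cases j0 with
    | zero =>
      left
      simp only [List.getD_cons_zero] at h1 h2
      exact ⟨h1, h2, h3⟩
    | succ j0 =>
      right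
      simp only [List.getD_cons_succ] at h1 h2
      exact ⟨j0, by simpa using hj0, h1, h2, by omega⟩
  · rintro (⟨h1, h2, h3⟩ | ⟨j0, hj0, h1, h2, h3⟩)
    · exact ⟨0, by simp, by simpa using h1, by simpa using h2, h3⟩
    · exact ⟨j0 + 1, by simpa using hj0, by simpa using h1, by simpa using h2, by omega⟩

lemma mem_dCells_append (u : ℕ × ℕ) :
    u ∈ dCells (T ++ [(lo + 1, hi + 1)]) ↔
      ((∃ j0 < T.length, (T.getD j0 (1, 0)).1 ≤ u.1 ∧ u.1 ≤ (T.getD j0 (1, 0)).2 ∧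
          u.2 = j0 + 1) ∨
        (lo + 1 ≤ u.1 ∧ u.1 ≤ hi + 1 ∧ u.2 = T.length + 1)) := by
  have hlast : (T ++ [(lo + 1, hi + 1)]).getD T.length (1, 0) = (lo + 1, hi + 1) := by
    rw [List.getD_eq_getElem _ _ (by simp)]
    simp
  rw [mem_dCells]
  constructor
  · rintro ⟨j0, hj0, h1, h2, h3⟩
    rw [show (T ++ [(lo + 1, hi + 1)]).length = T.length + 1 by simp] at hj0
    rcases Nat.lt_succ_iff_lt_or_eq.mp hj0 with h | rfl
    · rw [List.getD_append _ _ _ _ h] at h1 h2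
      exact Or.inl ⟨j0, h, h1, h2, h3⟩
    · rw [hlast] at h1 h2
      exact Or.inr ⟨h1, h2, h3⟩
  · rintro (⟨j0, hj0, h1, h2, h3⟩ | ⟨h1, h2, h3⟩)
    · exact ⟨j0, by simp; omega, by rwa [List.getD_append _ _ _ _ hj0],
        by rwa [List.getD_append _ _ _ _ hj0], h3⟩
    · exact ⟨T.length, by simp, by rwa [hlast], by rwa [hlast], h3⟩

lemma dCells_cyc :
    dCells (T ++ [(lo + 1, hi + 1)]) = (dCells ((lo, hi) :: T)).image (phi T.length) := by
  ext u
  rw [mem_dCells_append, Finset.mem_image]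
  constructor
  · rintro (⟨j0, hj0, h1, h2, h3⟩ | ⟨h1, h2, h3⟩)
    · refine ⟨(u.1, j0 + 2), ?_, ?_⟩
      · rw [mem_dCells_cons]
        exact Or.inr ⟨j0, hj0, h1, h2, rfl⟩
      · rw [phi_eval_ne T.length u.1 (j0 + 2) (by omega)]
        rw [show j0 + 2 - 1 = j0 + 1 from rfl, ← h3]
    · refine ⟨(u.1 - 1, 1), ?_, ?_⟩
      · rw [mem_dCells_cons]
        exact Or.inl ⟨by omega, by omega, rfl⟩
      · rw [phi_eval_one, show u.1 - 1 + 1 = u.1 by omega, ← h3]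
  · rintro ⟨⟨c, d⟩, hv, rfl⟩
    rw [mem_dCells_cons] at hv
    rcases hv with ⟨h1, h2, h3⟩ | ⟨j0, hj0, h1, h2, h3⟩
    · simp only at h1 h2 h3
      subst h3
      rw [phi_eval_one]
      exact Or.inr ⟨by omega, by omega, rfl⟩
    · simp only at h1 h2 h3
      rw [phi_eval_ne T.length c d (by omega)]
      exact Or.inl ⟨j0, hj0, by simpa using h1, by simpa using h2, by simp; omega⟩

lemma phi_injOn_cells (s : Finset (ℕ × ℕ)) (hs : s ⊆ dCells ((lo, hi) :: T)) :
    Set.InjOn (phi T.length) s := by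
  intro x hx y hy hxy
  have hx2 := dCells_col_bounds _ x (hs hx)
  have hy2 := dCells_col_bounds _ y (hs hy)
  exact phi_inj T.length x y (by simpa using hx2) (by simpa using hy2) hxy

lemma dSize_cyc : dSize (T ++ [(lo + 1, hi + 1)]) = dSize ((lo, hi) :: T) := by
  rw [dSize, dSize, dCells_cyc,
    Finset.card_image_of_injOn (phi_injOn_cells lo hi T _ (fun x hx => hx))]

lemma pos_iff (m : ℕ) (u v : ℕ × ℕ) (hu : 1 ≤ u.2 ∧ u.2 ≤ m + 1)
    (hv : 1 ≤ v.2 ∧ v.2 ≤ m + 1) :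
    (((phi m u).1 = (phi m v).1 ∧ (phi m u).2 < (phi m v).2) ∨
      ((phi m u).1 = (phi m v).1 + 1 ∧ (phi m v).2 < (phi m u).2)) ↔
    ((u.1 = v.1 ∧ u.2 < v.2) ∨ (u.1 = v.1 + 1 ∧ v.2 < u.2)) := by
  obtain ⟨a, b⟩ := u
  obtain ⟨c, d⟩ := v
  simp only at hu hv
  simp only [phi]
  split_ifs <;> simp only [] <;> omega

lemma cond_cyc (hlo : 1 ≤ lo) (w : List ℕ) (u v : ℕ × ℕ)
    (hu : u ∈ dCells ((lo, hi) :: T)) (hv : v ∈ dCells ((lo, hi) :: T)) :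
    (dEntry (T ++ [(lo + 1, hi + 1)]) w (phi T.length v) <
        dEntry (T ++ [(lo + 1, hi + 1)]) w (phi T.length u) ∧
      (((phi T.length u).1 = (phi T.length v).1 ∧ (phi T.length u).2 < (phi T.length v).2) ∨
        ((phi T.length u).1 = (phi T.length v).1 + 1 ∧
          (phi T.length v).2 < (phi T.length u).2))) ↔
    (dEntry ((lo, hi) :: T) w v < dEntry ((lo, hi) :: T) w u ∧
      ((u.1 = v.1 ∧ u.2 < v.2) ∨ (u.1 = v.1 + 1 ∧ v.2 < u.2))) := by
  have hub := dCells_col_bounds _ u hu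
  have hvb := dCells_col_bounds _ v hv
  rw [dEntry_cyc lo hi T hlo w u (by simpa using hub),
    dEntry_cyc lo hi T hlo w v (by simpa using hvb),
    pos_iff T.length u v (by simpa using hub) (by simpa using hvb)]

lemma invCount_cyc (hlo : 1 ≤ lo) (w : List ℕ) :
    invCount (T ++ [(lo + 1, hi + 1)]) w = invCount ((lo, hi) :: T) w := by
  unfold invCount
  have key : ((dCells (T ++ [(lo + 1, hi + 1)]) ×ˢ dCells (T ++ [(lo + 1, hi + 1)])).filter
        fun p => dEntry (T ++ [(lo + 1, hi + 1)]) w p.2 < dEntry (T ++ [(lo + 1, hi + 1)]) w p.1 ∧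
          ((p.1.1 = p.2.1 ∧ p.1.2 < p.2.2) ∨ (p.1.1 = p.2.1 + 1 ∧ p.2.2 < p.1.2))) =
      (((dCells ((lo, hi) :: T) ×ˢ dCells ((lo, hi) :: T)).filter
        fun p => dEntry ((lo, hi) :: T) w p.2 < dEntry ((lo, hi) :: T) w p.1 ∧
          ((p.1.1 = p.2.1 ∧ p.1.2 < p.2.2) ∨ (p.1.1 = p.2.1 + 1 ∧ p.2.2 < p.1.2))).image
        (Prod.map (phi T.length) (phi T.length))) := by
    ext p
    simp only [Finset.mem_filter, Finset.mem_product, Finset.mem_image, dCells_cyc lo hi T,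
      Finset.mem_image]
    constructor
    · rintro ⟨⟨⟨v1, hv1, he1⟩, ⟨v2, hv2, he2⟩⟩, hcond⟩
      refine ⟨(v1, v2), ⟨⟨hv1, hv2⟩, ?_⟩, Prod.ext he1 he2⟩
      rw [← he1, ← he2] at hcond
      exact (cond_cyc lo hi T hlo w v1 v2 hv1 hv2).mp hcond
    · rintro ⟨q, ⟨⟨hq1, hq2⟩, hcond⟩, rfl⟩
      simp only [Prod.map_fst, Prod.map_snd]
      exact ⟨⟨⟨q.1, hq1, rfl⟩, ⟨q.2, hq2, rfl⟩⟩,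
        (cond_cyc lo hi T hlo w q.1 q.2 hq1 hq2).mpr hcond⟩
  rw [key, Finset.card_image_of_injOn]
  intro x hx y hy hxy
  simp only [Finset.coe_filter, Set.mem_setOf_eq, Finset.mem_product] at hx hy
  have h1 := phi_injOn_cells lo hi T _ (fun z hz => hz) (hx.1.1) (hy.1.1)
    (congrArg Prod.fst hxy)
  have h2 := phi_injOn_cells lo hi T _ (fun z hz => hz) (hx.1.2) (hy.1.2)
    (congrArg Prod.snd hxy)
  exact Prod.ext h1 h2

lemma phi_below (m : ℕ) (u : ℕ × ℕ) (h : 1 ≤ u.1) :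
    ((phi m u).1 - 1, (phi m u).2) = phi m (u.1 - 1, u.2) := by
  obtain ⟨a, b⟩ := u
  simp only at h
  simp only [phi]
  split_ifs <;> rw [Prod.mk.injEq] <;> omega

lemma descentCells_cyc (hD : ValidDiagram ((lo, hi) :: T)) (w : List ℕ) :
    descentCells (T ++ [(lo + 1, hi + 1)]) w =
      (descentCells ((lo, hi) :: T) w).image (phi T.length) := by
  have hlo : 1 ≤ lo := (hD _ List.mem_cons_self).1
  unfold descentCells
  ext u
  simp only [Finset.mem_filter, Finset.mem_image]
  constructor
  · rintro ⟨hu, hb, he⟩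
    rw [dCells_cyc lo hi T] at hu
    obtain ⟨v, hv, rfl⟩ := Finset.mem_image.mp hu
    have hv1 : 1 ≤ v.1 := dCells_row_pos _ hD v hv
    have hvb := dCells_col_bounds _ v hv
    rw [phi_below T.length v hv1] at hb he
    have hbmem : (v.1 - 1, v.2) ∈ dCells ((lo, hi) :: T) := by
      rw [dCells_cyc lo hi T] at hb
      obtain ⟨x, hx, hxe⟩ := Finset.mem_image.mp hb
      have hxb := dCells_col_bounds _ x hx
      have := phi_inj T.length x (v.1 - 1, v.2) (by simpa using hxb)
        (by simpa using hvb) hxe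
      rwa [← this]
    refine ⟨v, ⟨hv, hbmem, ?_⟩, rfl⟩
    rwa [dEntry_cyc lo hi T hlo w v (by simpa using hvb),
      dEntry_cyc lo hi T hlo w (v.1 - 1, v.2) (by simpa using hvb)] at he
  · rintro ⟨v, ⟨hv, hbmem, he⟩, rfl⟩
    have hv1 : 1 ≤ v.1 := dCells_row_pos _ hD v hv
    have hvb := dCells_col_bounds _ v hv
    refine ⟨by rw [dCells_cyc lo hi T]; exact Finset.mem_image.mpr ⟨v, hv, rfl⟩, ?_, ?_⟩
    · rw [phi_below T.length v hv1, dCells_cyc lo hi T]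
      exact Finset.mem_image.mpr ⟨(v.1 - 1, v.2), hbmem, rfl⟩
    · rw [phi_below T.length v hv1,
        dEntry_cyc lo hi T hlo w v (by simpa using hvb),
        dEntry_cyc lo hi T hlo w (v.1 - 1, v.2) (by simpa using hvb)]
      exact he

lemma cycFill_phi (f : ℕ × ℕ → Fqt) (u : ℕ × ℕ) (hu : 1 ≤ u.2 ∧ u.2 ≤ T.length + 1) :
    cycFill ((lo, hi) :: T) f (phi T.length u) = f u := by
  obtain ⟨a, b⟩ := u
  simp only at hu
  by_cases hb : b = 1
  · subst hb
    simp only [phi, if_pos rfl, cycFill]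
    rw [if_pos (by simp)]
    norm_num
  · simp only [phi, if_neg hb, cycFill]
    rw [if_neg (by simp; omega)]
    have : b - 1 + 1 = b := by omega
    rw [this]

lemma prodDesc_cyc (hD : ValidDiagram ((lo, hi) :: T)) (f : ℕ × ℕ → Fqt) (w : List ℕ) :
    ∏ u ∈ descentCells (T ++ [(lo + 1, hi + 1)]) w, cycFill ((lo, hi) :: T) f u =
      ∏ u ∈ descentCells ((lo, hi) :: T) w, f u := by
  rw [descentCells_cyc lo hi T hD w,
    Finset.prod_image (fun x hx y hy h => phi_inj T.length x y
      (by simpa using dCells_col_bounds _ x (Finset.mem_filter.mp hx).1)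
      (by simpa using dCells_col_bounds _ y (Finset.mem_filter.mp hy).1) h)]
  apply Finset.prod_congr rfl
  intro u hu
  have hub := dCells_col_bounds _ u (Finset.mem_filter.mp hu).1
  exact cycFill_phi lo hi T f u (by simpa using hub)

lemma statD_cyc (hD : ValidDiagram ((lo, hi) :: T)) (f : ℕ × ℕ → Fqt) (w : List ℕ) :
    statD ((lo, hi) :: T) f w =
      statD (T ++ [(lo + 1, hi + 1)]) (cycFill ((lo, hi) :: T) f) w := by
  have hlo : 1 ≤ lo := (hD _ List.mem_cons_self).1
  unfold statD
  rw [invCount_cyc lo hi T hlo w, prodDesc_cyc lo hi T hD f w]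

lemma genH_cyc (hD : ValidDiagram ((lo, hi) :: T)) (f : ℕ × ℕ → Fqt) :
    genH ((lo, hi) :: T) f =
      genH (T ++ [(lo + 1, hi + 1)]) (cycFill ((lo, hi) :: T) f) := by
  unfold genH
  rw [dSize_cyc lo hi T]
  exact congrArg List.sum (List.map_congr_left fun w hw => by
    rw [statD_cyc lo hi T hD f w])

end Cyc2


end CyclingAux


/-- Cycling rule.
If `(D', f') = cycling (D, f)` then `stat_{(D,f)}(w) = stat_{(D',f')}(w)` for every
`w ∈ S_{|D|}`, and consequently `H_{(D,f)}[X;q,t] = H_{(D',f')}[X;q,t]`. -/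
theorem cycling_rule (D : Diagram) (hD : ValidDiagram D) (hne : D ≠ [])
    (f : ℕ × ℕ → Fqt) :
    (∀ w : List ℕ, IsPermList (dSize D) w →
      statD D f w = statD (cycD D) (cycFill D f) w) ∧
    genH D f = genH (cycD D) (cycFill D f) := by
  rcases D with _ | ⟨⟨lo, hi⟩, T⟩
  · exact absurd rfl hne
  have hcyc : cycD ((lo, hi) :: T) = T ++ [(lo + 1, hi + 1)] := rfl
  constructor
  · intro w _
    rw [hcyc]
    exact CyclingAux.statD_cyc lo hi T hD f w
  · rw [hcyc]
    exact CyclingAux.genH_cyc lo hi T hD f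

end
end

section
/- (1) Let n ≥ 2 and w ∈ S_{2n+1}. If the directed arcs α_1(w) = (w_{2n}, w_{2n+1}) and α_2(w) = (w_{2n−2}, w_{2n−1}) of the matching M(w) cross, then w ∈ 𝔅_{2n+1} if and only if std(w_1⋯w_{2n−1}) ∈ 𝔅_{2n−1}. (2) Let n ≥ 2 and w ∈ S_{2n}. If the directed arcs α_1(w) = (w_{2n}, 2n+1) and α_2(w) = (w_{2n−2}, w_{2n−1}) cross, then w ∈ 𝔅_{2n} if and only if std(w_1⋯w_{2n−1}) ∈ 𝔅_{2n−1}. -/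
open scoped BigOperators Classical

noncomputable section

/-! ### Auxiliary lemmas for the Butler recursion -/

section ButlerAux

lemma std_length' (u : List ℕ) : (std u).length = u.length := by simp [std]

lemma std_getD_card (u : List ℕ) {s : ℕ} (hs : s < u.length) :
    (std u).getD s 0 = ((Finset.range u.length).filter fun t =>
      u.getD t 0 < u.getD s 0 ∨ (u.getD t 0 = u.getD s 0 ∧ t ≤ s)).card := by
  have h2 : s < (std u).length := by rwa [std_length']
  rw [List.getD_eq_getElem _ _ h2]
  simp only [std, List.getElem_map, List.getElem_range]
  rfl

lemma std_pos (u : List ℕ) {s : ℕ} (hs : s < u.length) : 1 ≤ (std u).getD s 0 := by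
  rw [std_getD_card u hs]
  have hmem : s ∈ (Finset.range u.length).filter fun t =>
      u.getD t 0 < u.getD s 0 ∨ (u.getD t 0 = u.getD s 0 ∧ t ≤ s) := by
    simp [Finset.mem_filter, Finset.mem_range, hs]
  exact Finset.card_pos.mpr ⟨s, hmem⟩

lemma std_lt_of_lt (u : List ℕ) {s t : ℕ} (hs : s < u.length) (ht : t < u.length)
    (h : u.getD s 0 < u.getD t 0) : (std u).getD s 0 < (std u).getD t 0 := by
  rw [std_getD_card u hs, std_getD_card u ht]
  apply Finset.card_lt_card
  rw [Finset.ssubset_def]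
  constructor
  · intro x hx
    rw [Finset.mem_filter] at hx ⊢
    refine ⟨hx.1, ?_⟩
    rcases hx.2 with h1 | ⟨h1, h2⟩
    · exact Or.inl (h1.trans h)
    · exact Or.inl (h1 ▸ h)
  · intro hsub
    have hmem : t ∈ (Finset.range u.length).filter fun x =>
        u.getD x 0 < u.getD t 0 ∨ (u.getD x 0 = u.getD t 0 ∧ x ≤ t) := by
      simp [Finset.mem_filter, Finset.mem_range, ht]
    have := hsub hmem
    rw [Finset.mem_filter] at this
    rcases this.2 with h1 | ⟨h1, _⟩
    · exact absurd h (not_lt.mpr h1.le)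
    · exact absurd h1 (ne_of_gt h)

lemma std_lt_iff (u : List ℕ) (hnd : u.Nodup) {s t : ℕ} (hs : s < u.length)
    (ht : t < u.length) :
    (std u).getD s 0 < (std u).getD t 0 ↔ u.getD s 0 < u.getD t 0 := by
  constructor
  · intro h
    rcases lt_trichotomy (u.getD s 0) (u.getD t 0) with h1 | h1 | h1
    · exact h1
    · exfalso
      rw [List.getD_eq_getElem _ _ hs, List.getD_eq_getElem _ _ ht] at h1
      have : s = t := (List.Nodup.getElem_inj_iff hnd).mp h1
      subst this
      exact lt_irrefl _ h
    · exact absurd h (not_lt.mpr (std_lt_of_lt u ht hs h1).le)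
  · exact std_lt_of_lt u hs ht

/-- A pair of "order-isomorphic" value assignments. -/
def MComp (M : ℕ → ℕ → Prop) : Prop :=
  ∀ a b c d, M a b → M c d → (a < c ↔ b < d)

lemma mcomp_min {M : ℕ → ℕ → Prop} (hM : MComp M) {a b c d : ℕ}
    (h1 : M a b) (h2 : M c d) : M (min a c) (min b d) := by
  rcases lt_or_ge a c with h | h
  · rw [min_eq_left h.le, min_eq_left ((hM a b c d h1 h2).mp h).le]; exact h1
  · have h' : ¬ b < d := fun hb => absurd ((hM a b c d h1 h2).mpr hb) (not_lt.mpr h)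
    rw [min_eq_right h, min_eq_right (not_lt.mp h')]; exact h2

lemma mcomp_max {M : ℕ → ℕ → Prop} (hM : MComp M) {a b c d : ℕ}
    (h1 : M a b) (h2 : M c d) : M (max a c) (max b d) := by
  rcases lt_or_ge a c with h | h
  · rw [max_eq_right h.le, max_eq_right ((hM a b c d h1 h2).mp h).le]; exact h2
  · have h' : ¬ b < d := fun hb => absurd ((hM a b c d h1 h2).mpr hb) (not_lt.mpr h)
    rw [max_eq_left h, max_eq_left (not_lt.mp h')]; exact h1

lemma crossArc_congr {M : ℕ → ℕ → Prop} (hM : MComp M) {A A' B B' : ℕ × ℕ}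
    (h1 : M A.1 A'.1) (h2 : M A.2 A'.2) (h3 : M B.1 B'.1) (h4 : M B.2 B'.2) :
    crossArc A B = crossArc A' B' := by
  have mA1 := mcomp_min hM h1 h2
  have mA2 := mcomp_max hM h1 h2
  have mB1 := mcomp_min hM h3 h4
  have mB2 := mcomp_max hM h3 h4
  unfold crossArc
  rw [decide_eq_decide]
  rw [hM _ _ _ _ mA1 mB1, hM _ _ _ _ mB1 mA2, hM _ _ _ _ mA2 mB2,
    hM _ _ _ _ mB1 mA1, hM _ _ _ _ mA1 mB2, hM _ _ _ _ mB2 mA2]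

lemma nestedArc_congr {M : ℕ → ℕ → Prop} (hM : MComp M) {A A' B B' : ℕ × ℕ}
    (h1 : M A.1 A'.1) (h2 : M A.2 A'.2) (h3 : M B.1 B'.1) (h4 : M B.2 B'.2) :
    nestedArc A B = nestedArc A' B' := by
  have mA1 := mcomp_min hM h1 h2
  have mA2 := mcomp_max hM h1 h2
  have mB1 := mcomp_min hM h3 h4
  have mB2 := mcomp_max hM h3 h4
  unfold nestedArc
  rw [decide_eq_decide]
  rw [hM _ _ _ _ mB1 mA1, hM _ _ _ _ mA2 mB2]

lemma forwardArc_congr {M : ℕ → ℕ → Prop} (hM : MComp M) {A A' : ℕ × ℕ}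
    (h1 : M A.1 A'.1) (h2 : M A.2 A'.2) : forwardArc A = forwardArc A' := by
  unfold forwardArc
  rw [decide_eq_decide]
  exact hM _ _ _ _ h1 h2

lemma reverseArc_congr {M : ℕ → ℕ → Prop} (hM : MComp M) {A A' : ℕ × ℕ}
    (h1 : M A.1 A'.1) (h2 : M A.2 A'.2) : reverseArc A = reverseArc A' := by
  unfold reverseArc
  rw [decide_eq_decide]
  exact hM _ _ _ _ h2 h1

/-- The matching relation between values of `v` and `w` at corresponding positions. -/
def MatchRel (v w : List ℕ) (L : ℕ) (a b : ℕ) : Prop :=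
  (a = 0 ∧ b = 0) ∨ ∃ p, 1 ≤ p ∧ p ≤ L ∧ a = nthW v p ∧ b = nthW w p

lemma matchRel_comp (v w : List ℕ) (L : ℕ)
    (hv1 : ∀ p, 1 ≤ p → p ≤ L → 1 ≤ nthW v p)
    (hw1 : ∀ p, 1 ≤ p → p ≤ L → 1 ≤ nthW w p)
    (hiff : ∀ p q, 1 ≤ p → p ≤ L → 1 ≤ q → q ≤ L →
      (nthW v p < nthW v q ↔ nthW w p < nthW w q)) :
    MComp (MatchRel v w L) := by
  rintro a b c d (⟨rfl, rfl⟩ | ⟨p, hp1, hp2, rfl, rfl⟩) (⟨rfl, rfl⟩ | ⟨q, hq1, hq2, rfl, rfl⟩)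
  · simp
  · constructor
    · intro _; exact lt_of_lt_of_le Nat.zero_lt_one (hw1 q hq1 hq2)
    · intro _; exact lt_of_lt_of_le Nat.zero_lt_one (hv1 q hq1 hq2)
  · simp
  · exact hiff p q hp1 hp2 hq1 hq2

lemma butler_step (n : ℕ) (hn : 2 ≤ n) (M : ℕ → ℕ → Prop) (hM : MComp M)
    (w v : List ℕ)
    (hKw : numArcs w.length = n + 1)
    (hKv : numArcs v.length = n)
    (harc : ∀ k, 1 ≤ k → k ≤ n →
      M (arcW v k).1 (arcW w (k + 1)).1 ∧ M (arcW v k).2 (arcW w (k + 1)).2)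
    (hcross : crossArc (arcW w 1) (arcW w 2) = true) :
    isButlerB w = isButlerB v := by
  classical
  have hcr : ∀ k, 1 ≤ k → k ≤ n - 1 →
      crossArc (arcW v k) (arcW v (k + 1)) = crossArc (arcW w (k + 1)) (arcW w (k + 2)) := by
    intro k hk1 hk2
    obtain ⟨h1, h2⟩ := harc k hk1 (by omega)
    obtain ⟨h3, h4⟩ := harc (k + 1) (by omega) (by omega)
    exact crossArc_congr hM h1 h2 h3 h4
  have himg : ((Finset.Icc 1 (numArcs w.length - 1)).filter fun k =>
        crossArc (arcW w k) (arcW w (k + 1)) = false) =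
      ((Finset.Icc 1 (numArcs v.length - 1)).filter fun k =>
        crossArc (arcW v k) (arcW v (k + 1)) = false).image (· + 1) := by
    ext k
    simp only [Finset.mem_image, Finset.mem_filter, Finset.mem_Icc, hKw, hKv]
    constructor
    · rintro ⟨⟨hk1, hkn⟩, hc⟩
      match k, hk1 with
      | 1, _ => rw [hcross] at hc; exact absurd hc (by simp)
      | (j+2), _ =>
        refine ⟨j + 1, ⟨⟨by omega, by omega⟩, ?_⟩, rfl⟩
        rw [hcr (j + 1) (by omega) (by omega)]
        exact hc
    · rintro ⟨j, ⟨⟨hj1, hjn⟩, hc⟩, rfl⟩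
      refine ⟨⟨by omega, by omega⟩, ?_⟩
      rw [← hcr j hj1 hjn]
      exact hc
  have hne : ((Finset.Icc 1 (numArcs w.length - 1)).filter fun k =>
        crossArc (arcW w k) (arcW w (k + 1)) = false).Nonempty ↔
      ((Finset.Icc 1 (numArcs v.length - 1)).filter fun k =>
        crossArc (arcW v k) (arcW v (k + 1)) = false).Nonempty := by
    rw [himg, Finset.image_nonempty]
  unfold isButlerB
  by_cases hV : ((Finset.Icc 1 (numArcs v.length - 1)).filter fun k =>
      crossArc (arcW v k) (arcW v (k + 1)) = false).Nonempty
  · have hW := hne.mpr hV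
    rw [dif_pos hW, dif_pos hV]
    dsimp only
    set m := (((Finset.Icc 1 (numArcs v.length - 1)).filter fun k =>
        crossArc (arcW v k) (arcW v (k + 1)) = false)).min' hV with hm
    have hmin : (((Finset.Icc 1 (numArcs w.length - 1)).filter fun k =>
        crossArc (arcW w k) (arcW w (k + 1)) = false)).min' hW = m + 1 := by
      apply le_antisymm
      · apply Finset.min'_le
        rw [himg]
        exact Finset.mem_image_of_mem _ (Finset.min'_mem _ hV)
      · obtain ⟨j, hj, hjk⟩ :=
          Finset.mem_image.mp ((Finset.ext_iff.mp himg _).mp (Finset.min'_mem _ hW))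
        have := Finset.min'_le _ j hj
        omega
    rw [hmin]
    have hmem := Finset.min'_mem _ hV
    rw [← hm] at hmem
    rw [Finset.mem_filter, Finset.mem_Icc, hKv] at hmem
    obtain ⟨⟨hm1, hm2⟩, _⟩ := hmem
    obtain ⟨h1, h2⟩ := harc m hm1 (by omega)
    obtain ⟨h3, h4⟩ := harc (m + 1) (by omega) (by omega)
    rw [nestedArc_congr hM h3 h4 h1 h2, reverseArc_congr hM h1 h2,
      forwardArc_congr hM h1 h2]
  · have hW : ¬ ((Finset.Icc 1 (numArcs w.length - 1)).filter fun k =>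
        crossArc (arcW w k) (arcW w (k + 1)) = false).Nonempty := fun h => hV (hne.mp h)
    rw [dif_neg hW, dif_neg hV]
    rw [hKw, hKv]
    have e1 : n + 1 - 1 = (n - 1) + 1 := by omega
    rw [e1]
    obtain ⟨h1, h2⟩ := harc (n - 1) (by omega) (by omega)
    exact (reverseArc_congr hM h1 h2).symm

lemma arcW_odd (w : List ℕ) (n k : ℕ) (hlen : w.length = 2 * n + 1)
    (hk1 : 1 ≤ k) (hk : k ≤ n) :
    arcW w k = (nthW w (2 * n + 2 - 2 * k), nthW w (2 * n + 3 - 2 * k)) := by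
  simp only [arcW]
  rw [hlen]
  rw [if_neg (by omega), if_pos (by omega)]
  rw [show 2 * n + 1 - 2 * (k - 1) - 1 = 2 * n + 2 - 2 * k from by omega,
    show 2 * n + 1 - 2 * (k - 1) = 2 * n + 3 - 2 * k from by omega]

lemma arcW_odd_last (w : List ℕ) (n k : ℕ) (hlen : w.length = 2 * n + 1)
    (hk : n < k) : arcW w k = (0, nthW w 1) := by
  simp only [arcW]
  rw [hlen]
  rw [if_neg (by omega), if_neg (by omega)]

lemma arcW_even_mid (w : List ℕ) (n k : ℕ) (hlen : w.length = 2 * n)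
    (hk1 : 2 ≤ k) (hk : k ≤ n) :
    arcW w k = (nthW w (2 * n + 2 - 2 * k), nthW w (2 * n + 3 - 2 * k)) := by
  simp only [arcW]
  rw [hlen]
  rw [if_pos (by omega), if_neg (by omega), if_pos (by omega)]
  rw [show 2 * n - 2 * (k - 1) = 2 * n + 2 - 2 * k from by omega]
  rw [show 2 * n + 2 - 2 * k + 1 = 2 * n + 3 - 2 * k from by omega]

lemma arcW_even_last (w : List ℕ) (n k : ℕ) (hlen : w.length = 2 * n)
    (hk1 : k ≠ 1) (hk : n < k) : arcW w k = (0, nthW w 1) := by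
  simp only [arcW]
  rw [hlen]
  rw [if_pos (by omega), if_neg hk1, if_neg (by omega)]

lemma butler_key (n : ℕ) (hn : 2 ≤ n) (w : List ℕ) (N : ℕ)
    (hN : N = 2 * n + 1 ∨ N = 2 * n)
    (hperm : w.Perm (List.range' 1 N))
    (hcross : crossArc (arcW w 1) (arcW w 2) = true) :
    isButlerB w = isButlerB (std (w.take (2 * n - 1))) := by
  have hwlen : w.length = N := hperm.length_eq.trans (by simp)
  have hNle : 2 * n - 1 ≤ N := by omega
  set u := w.take (2 * n - 1) with hu
  have hul : u.length = 2 * n - 1 := by rw [hu, List.length_take]; omega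
  set v := std u with hv
  have hvl : v.length = 2 * n - 1 := by rw [hv, std_length', hul]
  have hwnd : w.Nodup := hperm.nodup_iff.mpr List.nodup_range'
  have hund : u.Nodup := hwnd.sublist (List.take_sublist _ _)
  have hwent : ∀ p, 1 ≤ p → p ≤ 2 * n - 1 → 1 ≤ nthW w p := by
    intro p h1 h2
    have hp : p - 1 < w.length := by omega
    rw [nthW, List.getD_eq_getElem _ _ hp]
    have hmem : w[p - 1] ∈ w := List.getElem_mem _
    have := hperm.mem_iff.mp hmem
    rw [List.mem_range'_1] at this
    omega
  have huw : ∀ p, 1 ≤ p → p ≤ 2 * n - 1 → nthW u p = nthW w p := by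
    intro p h1 h2
    have hp : p - 1 < u.length := by omega
    have hp' : p - 1 < w.length := by omega
    rw [nthW, nthW, List.getD_eq_getElem _ _ hp, List.getD_eq_getElem _ _ hp']
    exact List.getElem_take
  have hvent : ∀ p, 1 ≤ p → p ≤ 2 * n - 1 → 1 ≤ nthW v p := by
    intro p h1 h2
    rw [nthW, hv]
    exact std_pos u (by omega)
  have hviff : ∀ p q, 1 ≤ p → p ≤ 2 * n - 1 → 1 ≤ q → q ≤ 2 * n - 1 →
      (nthW v p < nthW v q ↔ nthW w p < nthW w q) := by
    intro p q hp1 hp2 hq1 hq2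
    rw [← huw p hp1 hp2, ← huw q hq1 hq2]
    simp only [nthW, hv]
    exact std_lt_iff u hund (by omega) (by omega)
  have hM : MComp (MatchRel v w (2 * n - 1)) :=
    matchRel_comp v w (2 * n - 1) hvent hwent hviff
  have hKw : numArcs w.length = n + 1 := by
    rcases hN with h | h <;> rw [hwlen, h] <;> simp only [numArcs] <;> split <;> omega
  have hKv : numArcs v.length = n := by
    rw [hvl]; simp only [numArcs]; split <;> omega
  have hvl' : v.length = 2 * (n - 1) + 1 := by omega
  have harc : ∀ k, 1 ≤ k → k ≤ n →
      MatchRel v w (2 * n - 1) (arcW v k).1 (arcW w (k + 1)).1 ∧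
      MatchRel v w (2 * n - 1) (arcW v k).2 (arcW w (k + 1)).2 := by
    intro k hk1 hkn
    rcases Nat.lt_or_ge k n with hlt | hge
    · have hva : arcW v k = (nthW v (2 * (n - 1) + 2 - 2 * k),
          nthW v (2 * (n - 1) + 3 - 2 * k)) := arcW_odd v (n - 1) k hvl' hk1 (by omega)
      have hwa : arcW w (k + 1) = (nthW w (2 * n + 2 - 2 * (k + 1)),
          nthW w (2 * n + 3 - 2 * (k + 1))) := by
        rcases hN with h | h
        · exact arcW_odd w n (k + 1) (by omega) (by omega) (by omega)
        · exact arcW_even_mid w n (k + 1) (by omega) (by omega) (by omega)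
      rw [hva, hwa]
      constructor
      · refine Or.inr ⟨2 * n - 2 * k, by omega, by omega, ?_, ?_⟩
        · show nthW v (2 * (n - 1) + 2 - 2 * k) = nthW v (2 * n - 2 * k)
          congr 1; omega
        · show nthW w (2 * n + 2 - 2 * (k + 1)) = nthW w (2 * n - 2 * k)
          congr 1; omega
      · refine Or.inr ⟨2 * n - 2 * k + 1, by omega, by omega, ?_, ?_⟩
        · show nthW v (2 * (n - 1) + 3 - 2 * k) = nthW v (2 * n - 2 * k + 1)
          congr 1; omega
        · show nthW w (2 * n + 3 - 2 * (k + 1)) = nthW w (2 * n - 2 * k + 1)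
          congr 1; omega
    · have hkn' : k = n := le_antisymm hkn hge
      subst hkn'
      have hva : arcW v k = (0, nthW v 1) := arcW_odd_last v (k - 1) k hvl' (by omega)
      have hwa : arcW w (k + 1) = (0, nthW w 1) := by
        rcases hN with h | h
        · exact arcW_odd_last w k (k + 1) (by omega) (by omega)
        · exact arcW_even_last w k (k + 1) (by omega) (by omega) (by omega)
      rw [hva, hwa]
      exact ⟨Or.inl ⟨rfl, rfl⟩, Or.inr ⟨1, le_refl _, by omega, rfl, rfl⟩⟩
  exact butler_step n hn _ hM w v hKw hKv harc hcross

end ButlerAux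

/-- Butler recursion, Lemma on crossing arcs.
(1) For `w ∈ S_{2n+1}`, if `α_1(w)` and `α_2(w)` cross, then `w ∈ 𝔅_{2n+1}` iff
`std(w_1⋯w_{2n-1}) ∈ 𝔅_{2n-1}`.
(2) For `w ∈ S_{2n}`, if `α_1(w)` and `α_2(w)` cross, then `w ∈ 𝔅_{2n}` iff
`std(w_1⋯w_{2n-1}) ∈ 𝔅_{2n-1}`. -/
theorem butler_recursion :
    (∀ n : ℕ, 2 ≤ n → ∀ w : List ℕ, IsPermList (2 * n + 1) w →
      crossArc (arcW w 1) (arcW w 2) = true →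
      (isButlerB w = true ↔ isButlerB (std (w.take (2 * n - 1))) = true)) ∧
    (∀ n : ℕ, 2 ≤ n → ∀ w : List ℕ, IsPermList (2 * n) w →
      crossArc (arcW w 1) (arcW w 2) = true →
      (isButlerB w = true ↔ isButlerB (std (w.take (2 * n - 1))) = true)) := by
  constructor
  · intro n hn w hperm hcross
    rw [butler_key n hn w (2 * n + 1) (Or.inl rfl) hperm hcross]
  · intro n hn w hperm hcross
    rw [butler_key n hn w (2 * n) (Or.inr rfl) hperm hcross]

end
end

section
/- Let V = R_{[1,2]}({2}) be the vertical two-cell ribbon with contents 1, 2, let H = R_{[1,2]}(∅) be the horizontal two-cell ribbon with contents 1, 2, and let C_1, C_2 be single cells of contents 1 and 2. Then LLT_{(C_1,C_2)}[X;q] ≡ q·LLT_{(V)}[X;q] + LLT_{(H)}[X;q] as an LLT equivalence; that is, for every tuple λ of skew partitions, LLT_{((C_1,C_2),λ)}[X;q] = q·LLT_{((V),λ)}[X;q] + LLT_{((H),λ)}[X;q]. -/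
open scoped BigOperators Classical

noncomputable section

namespace LLTEquivAux

open List

abbrev Cell : Type := ℕ × ℕ × ℕ

def sh1 (u : Cell) : Cell := (u.1 + 1, u.2)
def sh2 (u : Cell) : Cell := (u.1 + 2, u.2)

lemma tCells_cons (s : SkewShape) (t : List SkewShape) :
    tCells (s :: t) = (skCells s).map (fun c => ((0 : ℕ), c.1, c.2)) ++ (tCells t).map sh1 := by
  unfold tCells
  rw [List.length_cons, List.range_succ_eq_map, List.flatMap_cons, List.flatMap_map]
  congr 1
  rw [List.map_flatMap]
  refine congrArg (fun f => List.flatMap f _) (funext fun k => ?_)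
  simp only [Function.comp, List.getD_cons_succ, List.map_map]
  rfl

lemma skCells_C1 : skCells (cellC 1) = [(2,1)] := by decide
lemma skCells_C2 : skCells (cellC 2) = [(3,1)] := by decide
lemma skCells_V : skCells (ribbonR 1 1 {2}) = [(3,2),(4,2)] := by decide
lemma skCells_H : skCells (ribbonR 1 1 ∅) = [(3,1),(3,2)] := by decide

lemma tC1_eq (lam : List SkewShape) :
    tCells ([cellC 1, cellC 2] ++ lam)
      = ((0:ℕ),(2:ℕ),(1:ℕ)) :: ((1:ℕ),(3:ℕ),(1:ℕ)) :: (tCells lam).map sh2 := by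
  show tCells (cellC 1 :: cellC 2 :: lam) = _
  rw [tCells_cons, tCells_cons, skCells_C1, skCells_C2]
  simp only [List.map_cons, List.map_nil, List.map_append, List.map_map, List.cons_append,
    List.nil_append]
  rfl

lemma tC2_eq (lam : List SkewShape) :
    tCells ([ribbonR 1 1 {2}] ++ lam)
      = ((0:ℕ),(3:ℕ),(2:ℕ)) :: ((0:ℕ),(4:ℕ),(2:ℕ)) :: (tCells lam).map sh1 := by
  show tCells (ribbonR 1 1 {2} :: lam) = _
  rw [tCells_cons, skCells_V]
  rfl

lemma tC3_eq (lam : List SkewShape) :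
    tCells ([ribbonR 1 1 ∅] ++ lam)
      = ((0:ℕ),(3:ℕ),(1:ℕ)) :: ((0:ℕ),(3:ℕ),(2:ℕ)) :: (tCells lam).map sh1 := by
  show tCells (ribbonR 1 1 ∅ :: lam) = _
  rw [tCells_cons, skCells_H]
  rfl

lemma skCells_nodup (s : SkewShape) : (skCells s).Nodup := by
  unfold skCells
  rw [List.nodup_flatMap]
  constructor
  · intro i0 _
    exact (List.nodup_range').map (fun a b h => by
      simpa using congrArg Prod.snd h)
  · refine List.pairwise_lt_range.imp ?_
    intro a b hab x hx hy
    simp only [List.mem_map] at hx hy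
    obtain ⟨j1, _, rfl⟩ := hx
    obtain ⟨j2, _, h2⟩ := hy
    have := congrArg Prod.fst h2
    simp only at this
    omega

lemma tCells_nodup (ν : List SkewShape) : (tCells ν).Nodup := by
  unfold tCells
  rw [List.nodup_flatMap]
  constructor
  · intro k _
    exact (skCells_nodup _).map (fun a b h => by
      have h1 := congrArg (Prod.fst ∘ Prod.snd) h
      have h2 := congrArg (Prod.snd ∘ Prod.snd) h
      simp only [Function.comp] at h1 h2
      exact Prod.ext h1 h2)
  · refine List.pairwise_lt_range.imp ?_
    intro a b hab x hx hy
    simp only [List.mem_map] at hx hy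
    obtain ⟨c1, _, rfl⟩ := hx
    obtain ⟨c2, _, h2⟩ := hy
    have := congrArg Prod.fst h2
    simp only at this
    omega

lemma lltLe_iff (u v : Cell) : lltLe u v = true ↔
    (contentOf u < contentOf v ∨
      (contentOf u = contentOf v ∧ (u.1 < v.1 ∨ (u.1 = v.1 ∧ u.2.2 ≤ v.2.2)))) := by
  simp [lltLe]

lemma lltLe_trans {a b c : Cell} (h1 : lltLe a b = true) (h2 : lltLe b c = true) :
    lltLe a c = true := by
  simp only [lltLe_iff, contentOf] at h1 h2 ⊢
  omega

lemma lltLe_total (a b : Cell) : (lltLe a b || lltLe b a) = true := by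
  simp only [Bool.or_eq_true, lltLe_iff, contentOf]
  omega

lemma lltLe_antisymm {a b : Cell} (h1 : lltLe a b = true) (h2 : lltLe b a = true) : a = b := by
  obtain ⟨a1, a2, a3⟩ := a
  obtain ⟨b1, b2, b3⟩ := b
  simp only [lltLe_iff, contentOf, Prod.mk.injEq] at h1 h2 ⊢
  omega

lemma lltReading_perm (ν : List SkewShape) : lltReading ν ~ tCells ν :=
  List.mergeSort_perm _ _

lemma lltReading_sorted (ν : List SkewShape) :
    (lltReading ν).Pairwise (fun a b => lltLe a b = true) := by
  have := List.pairwise_mergeSort (le := lltLe)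
    (fun a b c h1 h2 => lltLe_trans h1 h2)
    (fun a b => lltLe_total a b) (tCells ν)
  exact this.imp (fun h => h)

lemma lltReading_nodup (ν : List SkewShape) : (lltReading ν).Nodup :=
  (lltReading_perm ν).nodup_iff.2 (tCells_nodup ν)

lemma reading_map {ν ν' : List SkewShape} {φ : Cell → Cell}
    (hperm : (tCells ν).map φ ~ tCells ν')
    (hmono : ∀ u ∈ tCells ν, ∀ v ∈ tCells ν, lltLe u v = true → lltLe (φ u) (φ v) = true) :
    lltReading ν' = (lltReading ν).map φ := by
  haveI : Std.Antisymm (fun a b : Cell => lltLe a b = true) := ⟨fun a b => lltLe_antisymm⟩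
  refine (fun h1 h2 h3 => List.Perm.eq_of_pairwise' (r := fun a b => lltLe a b = true) h2 h3 h1) ?_ ?_ ?_
  · exact (lltReading_perm ν').trans (hperm.symm.trans ((lltReading_perm ν).map φ).symm)
  · exact lltReading_sorted ν'
  · refine (List.pairwise_map).2 ?_
    refine (lltReading_sorted ν).imp_of_mem ?_
    intro a b ha hb hab
    exact hmono a ((lltReading_perm ν).subset ha) b ((lltReading_perm ν).subset hb) hab

lemma indexOf_map_nodup {f : Cell → Cell} {l : List Cell} (h : (l.map f).Nodup) {u : Cell}
    (hu : u ∈ l) : (l.map f).idxOf (f u) = l.idxOf u := by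
  induction l with
  | nil => cases hu
  | cons a t ih =>
    rw [List.map_cons, List.nodup_cons] at h
    rcases List.mem_cons.1 hu with rfl | hu'
    · rw [List.map_cons]
      simp [List.idxOf_cons]
    · have hne : f u ≠ f a := fun he => h.1 (he ▸ List.mem_map_of_mem (f := f) hu')
      have hne' : u ≠ a := fun he => hne (by rw [he])
      rw [List.map_cons]
      simp only [List.idxOf_cons, Bool.cond_eq_ite, beq_iff_eq]
      rw [if_neg (Ne.symm hne), if_neg (Ne.symm hne'), ih h.2 hu']

lemma entry_map {ν ν' : List SkewShape} {φ : Cell → Cell}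
    (hread : lltReading ν' = (lltReading ν).map φ) (w : List ℕ) {u : Cell}
    (hu : u ∈ tCells ν) :
    lltEntry ν' w (φ u) = lltEntry ν w u := by
  unfold lltEntry
  rw [hread, indexOf_map_nodup (hread ▸ lltReading_nodup ν') ((lltReading_perm ν).mem_iff.2 hu)]

lemma product_map_map {α β : Type} (f : α → β) (l1 l2 : List α) :
    (l1.map f).product (l2.map f) = (l1.product l2).map (Prod.map f f) := by
  simp only [List.product, List.flatMap_map, List.map_flatMap, List.map_map]
  rfl

lemma countP_exception {α : Type} [DecidableEq α] (P Q : α → Bool) (x0 : α)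
    (hx : P x0 = true) (hq : Q x0 = false) :
    ∀ (l : List α), (∀ y ∈ l, y ≠ x0 → P y = Q y) →
      l.countP P = l.countP Q + l.count x0 := by
  intro l
  induction l with
  | nil => simp
  | cons a t ih =>
    intro h
    have ht := ih (fun y hy => h y (List.mem_cons_of_mem a hy))
    by_cases ha : a = x0
    · subst ha
      simp [List.countP_cons, List.count_cons, hx, hq, ht]
      omega
    · have := h a (List.mem_cons_self) ha
      simp [List.countP_cons, List.count_cons, this, ht, ha]
      omega

lemma sum_split {α : Type} {M : Type _} [AddCommMonoid M] (f : α → M) (p q r : α → Bool) :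
    ∀ (l : List α), (∀ x ∈ l, p x = (q x || r x)) → (∀ x ∈ l, ¬(q x = true ∧ r x = true)) →
      ((l.filter p).map f).sum = ((l.filter q).map f).sum + ((l.filter r).map f).sum := by
  intro l
  induction l with
  | nil => simp
  | cons a t ih =>
    intro h1 h2
    have ht := ih (fun x hx => h1 x (List.mem_cons_of_mem a hx))
      (fun x hx => h2 x (List.mem_cons_of_mem a hx))
    have hpa := h1 a (List.mem_cons_self)
    have hqa := h2 a (List.mem_cons_self)
    by_cases hq : q a = true
    · by_cases hr : r a = true
      · exact absurd ⟨hq, hr⟩ hqa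
      · have hr' : r a = false := by simpa using hr
        have hpa' : p a = true := by rw [hpa, hq, hr']; rfl
        simp [List.filter_cons, hpa', hq, hr', ht, add_assoc]
    · have hq' : q a = false := by simpa using hq
      by_cases hr : r a = true
      · have hpa' : p a = true := by rw [hpa, hq', hr]; rfl
        simp [List.filter_cons, hpa', hq', hr, ht, add_assoc, add_left_comm]
      · have hr' : r a = false := by simpa using hr
        have hpa' : p a = false := by rw [hpa, hq', hr']; rfl
        simp [List.filter_cons, hpa', hq', hr', ht]

set_option synthInstance.maxHeartbeats 1000000 in
lemma smul_list_sum (c : Fqt) : ∀ (l : List (MvPowerSeries ℕ Fqt)),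
    c • l.sum = (l.map (fun x => c • x)).sum
  | [] => smul_zero (A := MvPowerSeries ℕ Fqt) (M := Fqt) c
  | a :: t => by
      rw [List.map_cons, List.sum_cons, List.sum_cons,
        smul_add (M := Fqt) (A := MvPowerSeries ℕ Fqt), smul_list_sum c t]

lemma indexOf_lt_length' : ∀ {l : List Cell} {u : Cell}, u ∈ l → l.idxOf u < l.length := by
  intro l
  induction l with
  | nil => intro u hu; cases hu
  | cons a t ih =>
    intro u hu
    simp only [List.idxOf_cons, Bool.cond_eq_ite, beq_iff_eq, List.length_cons]
    by_cases hau : a = u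
    · rw [if_pos hau]; omega
    · rw [if_neg hau]
      have : u ∈ t := by
        rcases List.mem_cons.1 hu with rfl | h'
        · exact absurd rfl hau
        · exact h'
      have := ih this
      omega

lemma indexOf_inj' : ∀ {l : List Cell}, l.Nodup → ∀ {u v : Cell}, u ∈ l → v ∈ l →
    l.idxOf u = l.idxOf v → u = v := by
  intro l
  induction l with
  | nil => intro _ u v hu; cases hu
  | cons a t ih =>
    intro hnd u v hu hv he
    rw [List.nodup_cons] at hnd
    simp only [List.idxOf_cons, Bool.cond_eq_ite, beq_iff_eq] at he
    by_cases hau : a = u <;> by_cases hav : a = v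
    · rw [← hau, ← hav]
    · rw [if_pos hau, if_neg hav] at he
      omega
    · rw [if_neg hau, if_pos hav] at he
      omega
    · rw [if_neg hau, if_neg hav] at he
      have hu' : u ∈ t := by
        rcases List.mem_cons.1 hu with rfl | h'
        · exact absurd rfl hau
        · exact h'
      have hv' : v ∈ t := by
        rcases List.mem_cons.1 hv with rfl | h'
        · exact absurd rfl hav
        · exact h'
      exact ih hnd.2 hu' hv' (by omega)

def phi2 (u : Cell) : Cell :=
  if u = (((0:ℕ),(3:ℕ),(2:ℕ)) : Cell) then ((0:ℕ),(2:ℕ),(1:ℕ))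
  else if u = (((0:ℕ),(4:ℕ),(2:ℕ)) : Cell) then ((1:ℕ),(3:ℕ),(1:ℕ))
  else (u.1 + 1, u.2)

def phi3 (u : Cell) : Cell :=
  if u = (((0:ℕ),(3:ℕ),(1:ℕ)) : Cell) then ((1:ℕ),(3:ℕ),(1:ℕ))
  else if u = (((0:ℕ),(3:ℕ),(2:ℕ)) : Cell) then ((0:ℕ),(2:ℕ),(1:ℕ))
  else (u.1 + 1, u.2)

lemma phi2_a : phi2 ((0:ℕ),(3:ℕ),(2:ℕ)) = ((0:ℕ),(2:ℕ),(1:ℕ)) := by simp [phi2]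
lemma phi2_b : phi2 ((0:ℕ),(4:ℕ),(2:ℕ)) = ((1:ℕ),(3:ℕ),(1:ℕ)) := by simp [phi2]
lemma phi2_sh1 (t : Cell) : phi2 (sh1 t) = sh2 t := by
  simp [phi2, sh1, sh2, Prod.ext_iff]

lemma phi3_a : phi3 ((0:ℕ),(3:ℕ),(1:ℕ)) = ((1:ℕ),(3:ℕ),(1:ℕ)) := by simp [phi3]
lemma phi3_b : phi3 ((0:ℕ),(3:ℕ),(2:ℕ)) = ((0:ℕ),(2:ℕ),(1:ℕ)) := by simp [phi3]
lemma phi3_sh1 (t : Cell) : phi3 (sh1 t) = sh2 t := by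
  simp [phi3, sh1, sh2, Prod.ext_iff]

lemma hmap2 (lam : List SkewShape) :
    (tCells ([ribbonR 1 1 {2}] ++ lam)).map phi2 = tCells ([cellC 1, cellC 2] ++ lam) := by
  rw [tC2_eq, tC1_eq]
  rw [List.map_cons, List.map_cons, phi2_a, phi2_b, List.map_map]
  have he : (tCells lam).map (phi2 ∘ sh1) = (tCells lam).map sh2 :=
    List.map_congr_left (fun t _ => phi2_sh1 t)
  rw [he]

lemma hmap3 (lam : List SkewShape) :
    (tCells ([ribbonR 1 1 ∅] ++ lam)).map phi3
      = ((1:ℕ),(3:ℕ),(1:ℕ)) :: ((0:ℕ),(2:ℕ),(1:ℕ)) :: (tCells lam).map sh2 := by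
  rw [tC3_eq]
  rw [List.map_cons, List.map_cons, phi3_a, phi3_b, List.map_map]
  have he : (tCells lam).map (phi3 ∘ sh1) = (tCells lam).map sh2 :=
    List.map_congr_left (fun t _ => phi3_sh1 t)
  rw [he]

lemma hperm3 (lam : List SkewShape) :
    (tCells ([ribbonR 1 1 ∅] ++ lam)).map phi3 ~ tCells ([cellC 1, cellC 2] ++ lam) := by
  rw [hmap3, tC1_eq]
  exact List.Perm.swap _ _ _

lemma mem_tC1_succ2 (lam : List SkewShape) (k r c : ℕ) :
    (((k+2, r, c) : Cell) ∈ tCells ([cellC 1, cellC 2] ++ lam)) ↔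
      (((k, r, c) : Cell) ∈ tCells lam) := by
  rw [tC1_eq]
  simp only [List.mem_cons, List.mem_map, Prod.mk.injEq]
  constructor
  · rintro (⟨h, -⟩ | ⟨h, -⟩ | ⟨⟨t1, t2, t3⟩, ht, h⟩)
    · omega
    · omega
    · simp only [sh2, Prod.mk.injEq] at h
      obtain ⟨h1, h2, h3⟩ := h
      subst h2; subst h3
      have : t1 = k := by omega
      subst this; exact ht
  · intro h
    exact Or.inr (Or.inr ⟨(k, r, c), h, rfl⟩)

lemma mem_tC2_succ (lam : List SkewShape) (k r c : ℕ) :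
    (((k+1, r, c) : Cell) ∈ tCells ([ribbonR 1 1 {2}] ++ lam)) ↔
      (((k, r, c) : Cell) ∈ tCells lam) := by
  rw [tC2_eq]
  simp only [List.mem_cons, List.mem_map, Prod.mk.injEq]
  constructor
  · rintro (⟨h, -⟩ | ⟨h, -⟩ | ⟨⟨t1, t2, t3⟩, ht, h⟩)
    · omega
    · omega
    · simp only [sh1, Prod.mk.injEq] at h
      obtain ⟨h1, h2, h3⟩ := h
      subst h2; subst h3
      have : t1 = k := by omega
      subst this; exact ht
  · intro h
    exact Or.inr (Or.inr ⟨(k, r, c), h, rfl⟩)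

lemma mem_tC3_succ (lam : List SkewShape) (k r c : ℕ) :
    (((k+1, r, c) : Cell) ∈ tCells ([ribbonR 1 1 ∅] ++ lam)) ↔
      (((k, r, c) : Cell) ∈ tCells lam) := by
  rw [tC3_eq]
  simp only [List.mem_cons, List.mem_map, Prod.mk.injEq]
  constructor
  · rintro (⟨h, -⟩ | ⟨h, -⟩ | ⟨⟨t1, t2, t3⟩, ht, h⟩)
    · omega
    · omega
    · simp only [sh1, Prod.mk.injEq] at h
      obtain ⟨h1, h2, h3⟩ := h
      subst h2; subst h3
      have : t1 = k := by omega
      subst this; exact ht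
  · intro h
    exact Or.inr (Or.inr ⟨(k, r, c), h, rfl⟩)

lemma notmem1a (lam : List SkewShape) :
    (((0:ℕ),(2:ℕ),(2:ℕ)) : Cell) ∉ tCells ([cellC 1, cellC 2] ++ lam) := by
  intro hmem
  rw [tC1_eq] at hmem
  rcases List.mem_cons.1 hmem with h | hmem
  · exact absurd h (by decide)
  rcases List.mem_cons.1 hmem with h | hmem
  · exact absurd h (by decide)
  obtain ⟨⟨t1, t2, t3⟩, ht, h⟩ := List.mem_map.1 hmem
  simp only [sh2, Prod.mk.injEq] at h
  omega

lemma notmem1b (lam : List SkewShape) :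
    (((0:ℕ),(3:ℕ),(1:ℕ)) : Cell) ∉ tCells ([cellC 1, cellC 2] ++ lam) := by
  intro hmem
  rw [tC1_eq] at hmem
  rcases List.mem_cons.1 hmem with h | hmem
  · exact absurd h (by decide)
  rcases List.mem_cons.1 hmem with h | hmem
  · exact absurd h (by decide)
  obtain ⟨⟨t1, t2, t3⟩, ht, h⟩ := List.mem_map.1 hmem
  simp only [sh2, Prod.mk.injEq] at h
  omega

lemma notmem1c (lam : List SkewShape) :
    (((1:ℕ),(3:ℕ),(2:ℕ)) : Cell) ∉ tCells ([cellC 1, cellC 2] ++ lam) := by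
  intro hmem
  rw [tC1_eq] at hmem
  rcases List.mem_cons.1 hmem with h | hmem
  · exact absurd h (by decide)
  rcases List.mem_cons.1 hmem with h | hmem
  · exact absurd h (by decide)
  obtain ⟨⟨t1, t2, t3⟩, ht, h⟩ := List.mem_map.1 hmem
  simp only [sh2, Prod.mk.injEq] at h
  omega

lemma notmem1d (lam : List SkewShape) :
    (((1:ℕ),(4:ℕ),(1:ℕ)) : Cell) ∉ tCells ([cellC 1, cellC 2] ++ lam) := by
  intro hmem
  rw [tC1_eq] at hmem
  rcases List.mem_cons.1 hmem with h | hmem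
  · exact absurd h (by decide)
  rcases List.mem_cons.1 hmem with h | hmem
  · exact absurd h (by decide)
  obtain ⟨⟨t1, t2, t3⟩, ht, h⟩ := List.mem_map.1 hmem
  simp only [sh2, Prod.mk.injEq] at h
  omega

lemma notmem2a (lam : List SkewShape) :
    (((0:ℕ),(3:ℕ),(3:ℕ)) : Cell) ∉ tCells ([ribbonR 1 1 {2}] ++ lam) := by
  intro hmem
  rw [tC2_eq] at hmem
  rcases List.mem_cons.1 hmem with h | hmem
  · exact absurd h (by decide)
  rcases List.mem_cons.1 hmem with h | hmem
  · exact absurd h (by decide)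
  obtain ⟨⟨t1, t2, t3⟩, ht, h⟩ := List.mem_map.1 hmem
  simp only [sh1, Prod.mk.injEq] at h
  omega

lemma notmem2b (lam : List SkewShape) :
    (((0:ℕ),(4:ℕ),(3:ℕ)) : Cell) ∉ tCells ([ribbonR 1 1 {2}] ++ lam) := by
  intro hmem
  rw [tC2_eq] at hmem
  rcases List.mem_cons.1 hmem with h | hmem
  · exact absurd h (by decide)
  rcases List.mem_cons.1 hmem with h | hmem
  · exact absurd h (by decide)
  obtain ⟨⟨t1, t2, t3⟩, ht, h⟩ := List.mem_map.1 hmem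
  simp only [sh1, Prod.mk.injEq] at h
  omega

lemma notmem2c (lam : List SkewShape) :
    (((0:ℕ),(5:ℕ),(2:ℕ)) : Cell) ∉ tCells ([ribbonR 1 1 {2}] ++ lam) := by
  intro hmem
  rw [tC2_eq] at hmem
  rcases List.mem_cons.1 hmem with h | hmem
  · exact absurd h (by decide)
  rcases List.mem_cons.1 hmem with h | hmem
  · exact absurd h (by decide)
  obtain ⟨⟨t1, t2, t3⟩, ht, h⟩ := List.mem_map.1 hmem
  simp only [sh1, Prod.mk.injEq] at h
  omega

lemma notmem3a (lam : List SkewShape) :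
    (((0:ℕ),(4:ℕ),(1:ℕ)) : Cell) ∉ tCells ([ribbonR 1 1 ∅] ++ lam) := by
  intro hmem
  rw [tC3_eq] at hmem
  rcases List.mem_cons.1 hmem with h | hmem
  · exact absurd h (by decide)
  rcases List.mem_cons.1 hmem with h | hmem
  · exact absurd h (by decide)
  obtain ⟨⟨t1, t2, t3⟩, ht, h⟩ := List.mem_map.1 hmem
  simp only [sh1, Prod.mk.injEq] at h
  omega

lemma notmem3b (lam : List SkewShape) :
    (((0:ℕ),(3:ℕ),(3:ℕ)) : Cell) ∉ tCells ([ribbonR 1 1 ∅] ++ lam) := by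
  intro hmem
  rw [tC3_eq] at hmem
  rcases List.mem_cons.1 hmem with h | hmem
  · exact absurd h (by decide)
  rcases List.mem_cons.1 hmem with h | hmem
  · exact absurd h (by decide)
  obtain ⟨⟨t1, t2, t3⟩, ht, h⟩ := List.mem_map.1 hmem
  simp only [sh1, Prod.mk.injEq] at h
  omega

lemma notmem3c (lam : List SkewShape) :
    (((0:ℕ),(4:ℕ),(2:ℕ)) : Cell) ∉ tCells ([ribbonR 1 1 ∅] ++ lam) := by
  intro hmem
  rw [tC3_eq] at hmem
  rcases List.mem_cons.1 hmem with h | hmem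
  · exact absurd h (by decide)
  rcases List.mem_cons.1 hmem with h | hmem
  · exact absurd h (by decide)
  obtain ⟨⟨t1, t2, t3⟩, ht, h⟩ := List.mem_map.1 hmem
  simp only [sh1, Prod.mk.injEq] at h
  omega

lemma hmono2 (lam : List SkewShape) :
    ∀ u ∈ tCells ([ribbonR 1 1 {2}] ++ lam), ∀ v ∈ tCells ([ribbonR 1 1 {2}] ++ lam),
      lltLe u v = true → lltLe (phi2 u) (phi2 v) = true := by
  intro u hu v hv h
  rw [tC2_eq] at hu hv
  simp only [List.mem_cons, List.mem_map] at hu hv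
  rcases hu with rfl | rfl | ⟨t, ht, rfl⟩ <;> rcases hv with rfl | rfl | ⟨s, hs, rfl⟩ <;>
    (simp only [phi2_a, phi2_b, phi2_sh1];
     simp only [lltLe_iff, contentOf, sh1, sh2] at h ⊢;
     first | omega | simp)

lemma hmono3 (lam : List SkewShape) :
    ∀ u ∈ tCells ([ribbonR 1 1 ∅] ++ lam), ∀ v ∈ tCells ([ribbonR 1 1 ∅] ++ lam),
      lltLe u v = true → lltLe (phi3 u) (phi3 v) = true := by
  intro u hu v hv h
  rw [tC3_eq] at hu hv
  simp only [List.mem_cons, List.mem_map] at hu hv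
  rcases hu with rfl | rfl | ⟨t, ht, rfl⟩ <;> rcases hv with rfl | rfl | ⟨s, hs, rfl⟩ <;>
    (simp only [phi3_a, phi3_b, phi3_sh1];
     simp only [lltLe_iff, contentOf, sh1, sh2] at h ⊢;
     first | omega | simp)

lemma hread2 (lam : List SkewShape) :
    lltReading ([cellC 1, cellC 2] ++ lam)
      = (lltReading ([ribbonR 1 1 {2}] ++ lam)).map phi2 :=
  reading_map (by rw [hmap2]) (hmono2 lam)

lemma hread3 (lam : List SkewShape) :
    lltReading ([cellC 1, cellC 2] ++ lam)
      = (lltReading ([ribbonR 1 1 ∅] ++ lam)).map phi3 :=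
  reading_map (hperm3 lam) (hmono3 lam)

lemma corr2 (lam : List SkewShape) (w : List ℕ) {u : Cell}
    (hu : u ∈ tCells ([ribbonR 1 1 {2}] ++ lam)) :
    lltEntry ([cellC 1, cellC 2] ++ lam) w (phi2 u)
      = lltEntry ([ribbonR 1 1 {2}] ++ lam) w u :=
  entry_map (hread2 lam) w hu

lemma corr3 (lam : List SkewShape) (w : List ℕ) {u : Cell}
    (hu : u ∈ tCells ([ribbonR 1 1 ∅] ++ lam)) :
    lltEntry ([cellC 1, cellC 2] ++ lam) w (phi3 u)
      = lltEntry ([ribbonR 1 1 ∅] ++ lam) w u :=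
  entry_map (hread3 lam) w hu

lemma mem2_a (lam : List SkewShape) :
    (((0:ℕ),(3:ℕ),(2:ℕ)) : Cell) ∈ tCells ([ribbonR 1 1 {2}] ++ lam) := by
  rw [tC2_eq]; exact List.mem_cons_self

lemma mem2_b (lam : List SkewShape) :
    (((0:ℕ),(4:ℕ),(2:ℕ)) : Cell) ∈ tCells ([ribbonR 1 1 {2}] ++ lam) := by
  rw [tC2_eq]; exact List.mem_cons_of_mem _ (List.mem_cons_self)

lemma mem3_a (lam : List SkewShape) :
    (((0:ℕ),(3:ℕ),(1:ℕ)) : Cell) ∈ tCells ([ribbonR 1 1 ∅] ++ lam) := by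
  rw [tC3_eq]; exact List.mem_cons_self

lemma mem3_b (lam : List SkewShape) :
    (((0:ℕ),(3:ℕ),(2:ℕ)) : Cell) ∈ tCells ([ribbonR 1 1 ∅] ++ lam) := by
  rw [tC3_eq]; exact List.mem_cons_of_mem _ (List.mem_cons_self)

lemma corr2A (lam : List SkewShape) (w : List ℕ) :
    lltEntry ([cellC 1, cellC 2] ++ lam) w ((0:ℕ),(2:ℕ),(1:ℕ))
      = lltEntry ([ribbonR 1 1 {2}] ++ lam) w ((0:ℕ),(3:ℕ),(2:ℕ)) := by
  have := corr2 lam w (mem2_a lam)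
  rwa [phi2_a] at this

lemma corr2B (lam : List SkewShape) (w : List ℕ) :
    lltEntry ([cellC 1, cellC 2] ++ lam) w ((1:ℕ),(3:ℕ),(1:ℕ))
      = lltEntry ([ribbonR 1 1 {2}] ++ lam) w ((0:ℕ),(4:ℕ),(2:ℕ)) := by
  have := corr2 lam w (mem2_b lam)
  rwa [phi2_b] at this

lemma corr3A (lam : List SkewShape) (w : List ℕ) :
    lltEntry ([cellC 1, cellC 2] ++ lam) w ((1:ℕ),(3:ℕ),(1:ℕ))
      = lltEntry ([ribbonR 1 1 ∅] ++ lam) w ((0:ℕ),(3:ℕ),(1:ℕ)) := by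
  have := corr3 lam w (mem3_a lam)
  rwa [phi3_a] at this

lemma corr3B (lam : List SkewShape) (w : List ℕ) :
    lltEntry ([cellC 1, cellC 2] ++ lam) w ((0:ℕ),(2:ℕ),(1:ℕ))
      = lltEntry ([ribbonR 1 1 ∅] ++ lam) w ((0:ℕ),(3:ℕ),(2:ℕ)) := by
  have := corr3 lam w (mem3_b lam)
  rwa [phi3_b] at this

lemma mem2_sh1 (lam : List SkewShape) {t : Cell} (ht : t ∈ tCells lam) :
    sh1 t ∈ tCells ([ribbonR 1 1 {2}] ++ lam) := by
  rw [tC2_eq]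
  exact List.mem_cons_of_mem _ (List.mem_cons_of_mem _ (List.mem_map_of_mem (f := sh1) ht))

lemma mem3_sh1 (lam : List SkewShape) {t : Cell} (ht : t ∈ tCells lam) :
    sh1 t ∈ tCells ([ribbonR 1 1 ∅] ++ lam) := by
  rw [tC3_eq]
  exact List.mem_cons_of_mem _ (List.mem_cons_of_mem _ (List.mem_map_of_mem (f := sh1) ht))

lemma corr2C (lam : List SkewShape) (w : List ℕ) (k r c : ℕ)
    (h : ((k, r, c) : Cell) ∈ tCells lam) :
    lltEntry ([cellC 1, cellC 2] ++ lam) w (k+2, r, c)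
      = lltEntry ([ribbonR 1 1 {2}] ++ lam) w (k+1, r, c) := by
  have := corr2 lam w (mem2_sh1 lam h)
  rwa [phi2_sh1] at this

lemma corr3C (lam : List SkewShape) (w : List ℕ) (k r c : ℕ)
    (h : ((k, r, c) : Cell) ∈ tCells lam) :
    lltEntry ([cellC 1, cellC 2] ++ lam) w (k+2, r, c)
      = lltEntry ([ribbonR 1 1 ∅] ++ lam) w (k+1, r, c) := by
  have := corr3 lam w (mem3_sh1 lam h)
  rwa [phi3_sh1] at this

lemma hsplit1 (lam : List SkewShape) (P : Cell → Prop) :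
    (∀ u ∈ tCells ([cellC 1, cellC 2] ++ lam), P u) ↔
      (P ((0:ℕ),(2:ℕ),(1:ℕ)) ∧ P ((1:ℕ),(3:ℕ),(1:ℕ)) ∧ ∀ t ∈ tCells lam, P (sh2 t)) := by
  rw [tC1_eq, List.forall_mem_cons, List.forall_mem_cons, List.forall_mem_map]

lemma hsplit2 (lam : List SkewShape) (P : Cell → Prop) :
    (∀ u ∈ tCells ([ribbonR 1 1 {2}] ++ lam), P u) ↔
      (P ((0:ℕ),(3:ℕ),(2:ℕ)) ∧ P ((0:ℕ),(4:ℕ),(2:ℕ)) ∧ ∀ t ∈ tCells lam, P (sh1 t)) := by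
  rw [tC2_eq, List.forall_mem_cons, List.forall_mem_cons, List.forall_mem_map]

lemma hsplit3 (lam : List SkewShape) (P : Cell → Prop) :
    (∀ u ∈ tCells ([ribbonR 1 1 ∅] ++ lam), P u) ↔
      (P ((0:ℕ),(3:ℕ),(1:ℕ)) ∧ P ((0:ℕ),(3:ℕ),(2:ℕ)) ∧ ∀ t ∈ tCells lam, P (sh1 t)) := by
  rw [tC3_eq, List.forall_mem_cons, List.forall_mem_cons, List.forall_mem_map]

/-- The standardness condition restricted to the cells of `lam`, expressed with
entries of the `(C1, C2)` tuple. -/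
def lamCond (lam : List SkewShape) (w : List ℕ) : Prop :=
  ∀ t ∈ tCells lam,
    ((((t.1, t.2.1, t.2.2 + 1) : Cell) ∈ tCells lam →
      lltEntry ([cellC 1, cellC 2] ++ lam) w (t.1 + 2, t.2.1, t.2.2) <
        lltEntry ([cellC 1, cellC 2] ++ lam) w (t.1 + 2, t.2.1, t.2.2 + 1))) ∧
    ((((t.1, t.2.1 + 1, t.2.2) : Cell) ∈ tCells lam →
      lltEntry ([cellC 1, cellC 2] ++ lam) w (t.1 + 2, t.2.1, t.2.2) <
        lltEntry ([cellC 1, cellC 2] ++ lam) w (t.1 + 2, t.2.1 + 1, t.2.2)))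

lemma std1_iff (lam : List SkewShape) (w : List ℕ) :
    lltStandard ([cellC 1, cellC 2] ++ lam) w ↔ lamCond lam w := by
  unfold lltStandard
  rw [hsplit1]
  constructor
  · rintro ⟨-, -, h3⟩
    rintro ⟨k, r, c⟩ ht
    have h := h3 (k, r, c) ht
    simp only [sh2] at h
    constructor
    · intro hm; exact h.1 ((mem_tC1_succ2 lam k r (c+1)).2 hm)
    · intro hm; exact h.2 ((mem_tC1_succ2 lam k (r+1) c).2 hm)
  · intro h
    refine ⟨⟨?_, ?_⟩, ⟨?_, ?_⟩, ?_⟩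
    · intro hm; exact absurd hm (notmem1a lam)
    · intro hm; exact absurd hm (notmem1b lam)
    · intro hm; exact absurd hm (notmem1c lam)
    · intro hm; exact absurd hm (notmem1d lam)
    · rintro ⟨k, r, c⟩ ht
      have h := h (k, r, c) ht
      simp only [sh2]
      constructor
      · intro hm; exact h.1 ((mem_tC1_succ2 lam k r (c+1)).1 hm)
      · intro hm; exact h.2 ((mem_tC1_succ2 lam k (r+1) c).1 hm)

lemma std2_iff (lam : List SkewShape) (w : List ℕ) :
    lltStandard ([ribbonR 1 1 {2}] ++ lam) w ↔
      (lamCond lam w ∧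
        lltEntry ([cellC 1, cellC 2] ++ lam) w ((0:ℕ),(2:ℕ),(1:ℕ)) <
          lltEntry ([cellC 1, cellC 2] ++ lam) w ((1:ℕ),(3:ℕ),(1:ℕ))) := by
  unfold lltStandard
  rw [hsplit2]
  constructor
  · rintro ⟨h1, -, h3⟩
    constructor
    · rintro ⟨k, r, c⟩ ht
      have h := h3 (k, r, c) ht
      simp only [sh1] at h
      constructor
      · intro hm
        have hx := h.1 ((mem_tC2_succ lam k r (c+1)).2 hm)
        rw [corr2C lam w k r c ht, corr2C lam w k r (c+1) hm]
        exact hx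
      · intro hm
        have hx := h.2 ((mem_tC2_succ lam k (r+1) c).2 hm)
        rw [corr2C lam w k r c ht, corr2C lam w k (r+1) c hm]
        exact hx
    · have := h1.2 (mem2_b lam)
      rw [corr2A lam w, corr2B lam w]
      exact this
  · rintro ⟨hl, hab⟩
    refine ⟨⟨?_, ?_⟩, ⟨?_, ?_⟩, ?_⟩
    · intro hm; exact absurd hm (notmem2a lam)
    · intro _
      rw [← corr2A lam w, ← corr2B lam w]
      exact hab
    · intro hm; exact absurd hm (notmem2b lam)
    · intro hm; exact absurd hm (notmem2c lam)
    · rintro ⟨k, r, c⟩ ht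
      have h := hl (k, r, c) ht
      simp only [sh1]
      constructor
      · intro hm
        have hm' := (mem_tC2_succ lam k r (c+1)).1 hm
        have hx := h.1 hm'
        rw [corr2C lam w k r c ht, corr2C lam w k r (c+1) hm'] at hx
        exact hx
      · intro hm
        have hm' := (mem_tC2_succ lam k (r+1) c).1 hm
        have hx := h.2 hm'
        rw [corr2C lam w k r c ht, corr2C lam w k (r+1) c hm'] at hx
        exact hx

lemma std3_iff (lam : List SkewShape) (w : List ℕ) :
    lltStandard ([ribbonR 1 1 ∅] ++ lam) w ↔
      (lamCond lam w ∧
        lltEntry ([cellC 1, cellC 2] ++ lam) w ((1:ℕ),(3:ℕ),(1:ℕ)) <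
          lltEntry ([cellC 1, cellC 2] ++ lam) w ((0:ℕ),(2:ℕ),(1:ℕ))) := by
  unfold lltStandard
  rw [hsplit3]
  constructor
  · rintro ⟨h1, -, h3⟩
    constructor
    · rintro ⟨k, r, c⟩ ht
      have h := h3 (k, r, c) ht
      simp only [sh1] at h
      constructor
      · intro hm
        have hx := h.1 ((mem_tC3_succ lam k r (c+1)).2 hm)
        rw [corr3C lam w k r c ht, corr3C lam w k r (c+1) hm]
        exact hx
      · intro hm
        have hx := h.2 ((mem_tC3_succ lam k (r+1) c).2 hm)
        rw [corr3C lam w k r c ht, corr3C lam w k (r+1) c hm]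
        exact hx
    · have := h1.1 (mem3_b lam)
      rw [corr3A lam w, corr3B lam w]
      exact this
  · rintro ⟨hl, hab⟩
    refine ⟨⟨?_, ?_⟩, ⟨?_, ?_⟩, ?_⟩
    · intro _
      rw [← corr3A lam w, ← corr3B lam w]
      exact hab
    · intro hm; exact absurd hm (notmem3a lam)
    · intro hm; exact absurd hm (notmem3b lam)
    · intro hm; exact absurd hm (notmem3c lam)
    · rintro ⟨k, r, c⟩ ht
      have h := hl (k, r, c) ht
      simp only [sh1]
      constructor
      · intro hm
        have hm' := (mem_tC3_succ lam k r (c+1)).1 hm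
        have hx := h.1 hm'
        rw [corr3C lam w k r c ht, corr3C lam w k r (c+1) hm'] at hx
        exact hx
      · intro hm
        have hm' := (mem_tC3_succ lam k (r+1) c).1 hm
        have hx := h.2 hm'
        rw [corr3C lam w k r c ht, corr3C lam w k (r+1) c hm'] at hx
        exact hx

def P1pred (lam : List SkewShape) (w : List ℕ) : Cell × Cell → Bool := fun p =>
  decide (lltEntry ([cellC 1, cellC 2] ++ lam) w p.2 < lltEntry ([cellC 1, cellC 2] ++ lam) w p.1 ∧
    ((p.1.1 < p.2.1 ∧ contentOf p.1 = contentOf p.2) ∨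
      (p.2.1 < p.1.1 ∧ contentOf p.1 = contentOf p.2 + 1)))

def P2pred (lam : List SkewShape) (w : List ℕ) : Cell × Cell → Bool := fun p =>
  decide (lltEntry ([ribbonR 1 1 {2}] ++ lam) w p.2 < lltEntry ([ribbonR 1 1 {2}] ++ lam) w p.1 ∧
    ((p.1.1 < p.2.1 ∧ contentOf p.1 = contentOf p.2) ∨
      (p.2.1 < p.1.1 ∧ contentOf p.1 = contentOf p.2 + 1)))

def P3pred (lam : List SkewShape) (w : List ℕ) : Cell × Cell → Bool := fun p =>
  decide (lltEntry ([ribbonR 1 1 ∅] ++ lam) w p.2 < lltEntry ([ribbonR 1 1 ∅] ++ lam) w p.1 ∧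
    ((p.1.1 < p.2.1 ∧ contentOf p.1 = contentOf p.2) ∨
      (p.2.1 < p.1.1 ∧ contentOf p.1 = contentOf p.2 + 1)))

lemma inv_eq_P1 (lam : List SkewShape) (w : List ℕ) :
    lltInv ([cellC 1, cellC 2] ++ lam) w =
      ((tCells ([cellC 1, cellC 2] ++ lam)).product
        (tCells ([cellC 1, cellC 2] ++ lam))).countP (P1pred lam w) := rfl

lemma inv_eq_P2 (lam : List SkewShape) (w : List ℕ) :
    lltInv ([ribbonR 1 1 {2}] ++ lam) w =
      ((tCells ([ribbonR 1 1 {2}] ++ lam)).product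
        (tCells ([ribbonR 1 1 {2}] ++ lam))).countP (P2pred lam w) := rfl

lemma inv_eq_P3 (lam : List SkewShape) (w : List ℕ) :
    lltInv ([ribbonR 1 1 ∅] ++ lam) w =
      ((tCells ([ribbonR 1 1 ∅] ++ lam)).product
        (tCells ([ribbonR 1 1 ∅] ++ lam))).countP (P3pred lam w) := rfl

lemma mem_product' {a b : Cell} {l₁ l₂ : List Cell} :
    (a, b) ∈ l₁.product l₂ ↔ a ∈ l₁ ∧ b ∈ l₂ := List.mem_product

lemma hpt2 (lam : List SkewShape) (w : List ℕ) :
    ∀ p ∈ (tCells ([ribbonR 1 1 {2}] ++ lam)).product (tCells ([ribbonR 1 1 {2}] ++ lam)),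
      p ≠ ((((0:ℕ),(4:ℕ),(2:ℕ)) : Cell), (((0:ℕ),(3:ℕ),(2:ℕ)) : Cell)) →
      (P1pred lam w ∘ Prod.map phi2 phi2) p = P2pred lam w p := by
  rintro ⟨u, v⟩ hp hne
  have hu : u ∈ tCells ([ribbonR 1 1 {2}] ++ lam) := (mem_product'.1 hp).1
  have hv : v ∈ tCells ([ribbonR 1 1 {2}] ++ lam) := (mem_product'.1 hp).2
  have e1 := corr2 lam w hu
  have e2 := corr2 lam w hv
  simp only [Function.comp_apply, Prod.map_apply, P1pred, P2pred]
  simp only [e1, e2, decide_eq_decide]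
  rw [tC2_eq] at hu hv
  simp only [List.mem_cons, List.mem_map] at hu hv
  rcases hu with rfl | rfl | ⟨t, ht, rfl⟩ <;> rcases hv with rfl | rfl | ⟨s, hs, rfl⟩ <;>
    first
      | exact absurd rfl hne
      | (clear e1 e2 hne hp;
         simp only [phi2_a, phi2_b, phi2_sh1];
         simp only [contentOf, sh1, sh2];
         constructor <;> (rintro ⟨hh1, hh2⟩; exact ⟨hh1, by omega⟩))

lemma hx2 (lam : List SkewShape) (w : List ℕ)
    (hab : lltEntry ([cellC 1, cellC 2] ++ lam) w ((0:ℕ),(2:ℕ),(1:ℕ)) <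
      lltEntry ([cellC 1, cellC 2] ++ lam) w ((1:ℕ),(3:ℕ),(1:ℕ))) :
    (P1pred lam w ∘ Prod.map phi2 phi2)
      ((((0:ℕ),(4:ℕ),(2:ℕ)) : Cell), (((0:ℕ),(3:ℕ),(2:ℕ)) : Cell)) = true := by
  simp only [Function.comp_apply, Prod.map_apply, P1pred, phi2_a, phi2_b]
  rw [decide_eq_true_eq]
  exact ⟨hab, Or.inr ⟨by norm_num, by norm_num [contentOf]⟩⟩

lemma hq2 (lam : List SkewShape) (w : List ℕ) :
    P2pred lam w ((((0:ℕ),(4:ℕ),(2:ℕ)) : Cell), (((0:ℕ),(3:ℕ),(2:ℕ)) : Cell)) = false := by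
  simp [P2pred]

lemma inv2_eq (lam : List SkewShape) (w : List ℕ)
    (hab : lltEntry ([cellC 1, cellC 2] ++ lam) w ((0:ℕ),(2:ℕ),(1:ℕ)) <
      lltEntry ([cellC 1, cellC 2] ++ lam) w ((1:ℕ),(3:ℕ),(1:ℕ))) :
    lltInv ([cellC 1, cellC 2] ++ lam) w = lltInv ([ribbonR 1 1 {2}] ++ lam) w + 1 := by
  rw [inv_eq_P1, inv_eq_P2, ← hmap2 lam, product_map_map, List.countP_map]
  rw [countP_exception (P1pred lam w ∘ Prod.map phi2 phi2) (P2pred lam w)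
    ((((0:ℕ),(4:ℕ),(2:ℕ)) : Cell), (((0:ℕ),(3:ℕ),(2:ℕ)) : Cell))
    (hx2 lam w hab) (hq2 lam w) _ (hpt2 lam w)]
  have hc := List.count_eq_one_of_mem
    ((tCells_nodup ([ribbonR 1 1 {2}] ++ lam)).product (tCells_nodup ([ribbonR 1 1 {2}] ++ lam)))
    (mem_product'.2 ⟨mem2_b lam, mem2_a lam⟩)
  congr 1
  convert hc using 2
  · exact lawful_beq_subsingleton _ _
  · rfl

lemma hpt3 (lam : List SkewShape) (w : List ℕ)
    (hba : lltEntry ([cellC 1, cellC 2] ++ lam) w ((1:ℕ),(3:ℕ),(1:ℕ)) <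
      lltEntry ([cellC 1, cellC 2] ++ lam) w ((0:ℕ),(2:ℕ),(1:ℕ))) :
    ∀ p ∈ (tCells ([ribbonR 1 1 ∅] ++ lam)).product (tCells ([ribbonR 1 1 ∅] ++ lam)),
      (P1pred lam w ∘ Prod.map phi3 phi3) p = P3pred lam w p := by
  have hba' := hba
  rw [corr3A lam w, corr3B lam w] at hba'
  rintro ⟨u, v⟩ hp
  have hu : u ∈ tCells ([ribbonR 1 1 ∅] ++ lam) := (mem_product'.1 hp).1
  have hv : v ∈ tCells ([ribbonR 1 1 ∅] ++ lam) := (mem_product'.1 hp).2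
  have e1 := corr3 lam w hu
  have e2 := corr3 lam w hv
  simp only [Function.comp_apply, Prod.map_apply, P1pred, P3pred]
  simp only [e1, e2, decide_eq_decide]
  rw [tC3_eq] at hu hv
  simp only [List.mem_cons, List.mem_map] at hu hv
  rcases hu with rfl | rfl | ⟨t, ht, rfl⟩ <;> rcases hv with rfl | rfl | ⟨s, hs, rfl⟩ <;>
    (clear e1 e2 hp;
     simp only [phi3_a, phi3_b, phi3_sh1];
     simp only [contentOf, sh1, sh2];
     constructor <;> (rintro ⟨hh1, hh2⟩; exact ⟨hh1, by omega⟩))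

lemma inv3_eq (lam : List SkewShape) (w : List ℕ)
    (hba : lltEntry ([cellC 1, cellC 2] ++ lam) w ((1:ℕ),(3:ℕ),(1:ℕ)) <
      lltEntry ([cellC 1, cellC 2] ++ lam) w ((0:ℕ),(2:ℕ),(1:ℕ))) :
    lltInv ([cellC 1, cellC 2] ++ lam) w = lltInv ([ribbonR 1 1 ∅] ++ lam) w := by
  rw [inv_eq_P1, inv_eq_P3]
  have hperm : (tCells ([cellC 1, cellC 2] ++ lam)).product (tCells ([cellC 1, cellC 2] ++ lam))
      ~ ((tCells ([ribbonR 1 1 ∅] ++ lam)).product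
          (tCells ([ribbonR 1 1 ∅] ++ lam))).map (Prod.map phi3 phi3) := by
    rw [← product_map_map]
    exact (List.Perm.product (hperm3 lam) (hperm3 lam)).symm
  rw [List.Perm.countP_eq _ hperm, List.countP_map]
  refine List.countP_congr fun x hx => ?_
  rw [hpt3 lam w hba x hx]

lemma size2 (lam : List SkewShape) :
    lltSize ([ribbonR 1 1 {2}] ++ lam) = lltSize ([cellC 1, cellC 2] ++ lam) := by
  unfold lltSize
  rw [tC1_eq, tC2_eq]
  simp

lemma size3 (lam : List SkewShape) :
    lltSize ([ribbonR 1 1 ∅] ++ lam) = lltSize ([cellC 1, cellC 2] ++ lam) := by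
  unfold lltSize
  rw [tC1_eq, tC3_eq]
  simp

lemma entries_ne (lam : List SkewShape) (w : List ℕ)
    (hw : w ∈ PermWords (lltSize ([cellC 1, cellC 2] ++ lam))) :
    lltEntry ([cellC 1, cellC 2] ++ lam) w ((0:ℕ),(2:ℕ),(1:ℕ)) ≠
      lltEntry ([cellC 1, cellC 2] ++ lam) w ((1:ℕ),(3:ℕ),(1:ℕ)) := by
  have hwp : w ~ List.range' 1 (lltSize ([cellC 1, cellC 2] ++ lam)) :=
    List.mem_permutations.1 hw
  have hlen : w.length = lltSize ([cellC 1, cellC 2] ++ lam) := by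
    rw [hwp.length_eq, List.length_range']
  have hnd : w.Nodup := hwp.nodup_iff.2 List.nodup_range'
  have hL : (lltReading ([cellC 1, cellC 2] ++ lam)).length
      = lltSize ([cellC 1, cellC 2] ++ lam) := (lltReading_perm _).length_eq
  have hm1 : (((0:ℕ),(2:ℕ),(1:ℕ)) : Cell) ∈ lltReading ([cellC 1, cellC 2] ++ lam) :=
    (lltReading_perm _).mem_iff.2 (by rw [tC1_eq]; exact List.mem_cons_self)
  have hm2 : (((1:ℕ),(3:ℕ),(1:ℕ)) : Cell) ∈ lltReading ([cellC 1, cellC 2] ++ lam) :=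
    (lltReading_perm _).mem_iff.2
      (by rw [tC1_eq]; exact List.mem_cons_of_mem _ (List.mem_cons_self))
  have hi1 := indexOf_lt_length' hm1
  have hi2 := indexOf_lt_length' hm2
  have h1 : (lltReading ([cellC 1, cellC 2] ++ lam)).idxOf
      (((0:ℕ),(2:ℕ),(1:ℕ)) : Cell) < w.length := by omega
  have h2 : (lltReading ([cellC 1, cellC 2] ++ lam)).idxOf
      (((1:ℕ),(3:ℕ),(1:ℕ)) : Cell) < w.length := by omega
  unfold lltEntry
  intro he
  rw [List.getD_eq_getElem w 0 h1, List.getD_eq_getElem w 0 h2] at he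
  have hidx := (hnd.getElem_inj_iff).1 he
  exact absurd (indexOf_inj' (lltReading_nodup _) hm1 hm2 hidx) (by decide)

set_option synthInstance.maxHeartbeats 1000000 in
lemma pow_succ_smul (k : ℕ) (F : MvPowerSeries ℕ Fqt) :
    (qv ^ (k+1)) • F = qv • ((qv ^ k) • F) := by
  rw [pow_succ', mul_smul]

end LLTEquivAux


/-- LLT equivalence `(C_1, C_2) ≡ q (V) + (H)`.
For every tuple `lam` of skew partitions,
`LLT_{((C_1,C_2),lam)} = q ⋅ LLT_{((V),lam)} + LLT_{((H),lam)}`,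
where `V = R_{[1,2]}({2})`, `H = R_{[1,2]}(∅)`. -/
theorem llt_equiv_cells (lam : List SkewShape) :
    LLTpoly ([cellC 1, cellC 2] ++ lam)
      = qv • LLTpoly ([ribbonR 1 1 {2}] ++ lam) + LLTpoly ([ribbonR 1 1 ∅] ++ lam) := by
  classical
  have hsz2 := LLTEquivAux.size2 lam
  have hsz3 := LLTEquivAux.size3 lam
  unfold LLTpoly
  rw [hsz2, hsz3]
  rw [LLTEquivAux.sum_split
    (fun w => (qv ^ lltInv ([cellC 1, cellC 2] ++ lam) w) •
      FQS (lltSize ([cellC 1, cellC 2] ++ lam)) (iDes w))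
    (fun w => decide (lltStandard ([cellC 1, cellC 2] ++ lam) w))
    (fun w => decide (lltStandard ([ribbonR 1 1 {2}] ++ lam) w))
    (fun w => decide (lltStandard ([ribbonR 1 1 ∅] ++ lam) w))
    (PermWords (lltSize ([cellC 1, cellC 2] ++ lam)))
    ?_ ?_]
  · congr 1
    · rw [LLTEquivAux.smul_list_sum, List.map_map]
      refine congrArg List.sum (List.map_congr_left ?_)
      intro x hx
      have hx2 := (List.mem_filter.1 hx).2
      have hstd2 := of_decide_eq_true hx2
      obtain ⟨-, hab⟩ := (LLTEquivAux.std2_iff lam x).1 hstd2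
      show (qv ^ lltInv ([cellC 1, cellC 2] ++ lam) x) •
          FQS (lltSize ([cellC 1, cellC 2] ++ lam)) (iDes x)
        = qv • ((qv ^ lltInv ([ribbonR 1 1 {2}] ++ lam) x) •
          FQS (lltSize ([cellC 1, cellC 2] ++ lam)) (iDes x))
      rw [LLTEquivAux.inv2_eq lam x hab, LLTEquivAux.pow_succ_smul]
    · refine congrArg List.sum (List.map_congr_left ?_)
      intro x hx
      have hx3 := (List.mem_filter.1 hx).2
      have hstd3 := of_decide_eq_true hx3
      obtain ⟨-, hba⟩ := (LLTEquivAux.std3_iff lam x).1 hstd3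
      rw [LLTEquivAux.inv3_eq lam x hba]
  · intro x hx
    show decide (lltStandard ([cellC 1, cellC 2] ++ lam) x)
      = (decide (lltStandard ([ribbonR 1 1 {2}] ++ lam) x) ||
         decide (lltStandard ([ribbonR 1 1 ∅] ++ lam) x))
    rw [← Bool.decide_or, decide_eq_decide]
    have hne := LLTEquivAux.entries_ne lam x hx
    rw [LLTEquivAux.std1_iff lam x, LLTEquivAux.std2_iff lam x, LLTEquivAux.std3_iff lam x]
    constructor
    · intro hl
      rcases lt_or_gt_of_ne hne with h | h
      · exact Or.inl ⟨hl, h⟩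
      · exact Or.inr ⟨hl, h⟩
    · rintro (⟨hl, -⟩ | ⟨hl, -⟩) <;> exact hl
  · rintro x hx ⟨h2, h3⟩
    obtain ⟨-, hab⟩ := (LLTEquivAux.std2_iff lam x).1 (of_decide_eq_true h2)
    obtain ⟨-, hba⟩ := (LLTEquivAux.std3_iff lam x).1 (of_decide_eq_true h3)
    exact absurd hab (lt_asymm hba)


end
end
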